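/- arXiv:1810.05381 — 8 statements merged into one kernel-verified Lean document; each statement's English description precedes it below -/
import Mathlib

section
/- Let P ∈ B(H) be a bounded idempotent. Then the kernel of P − P* is the orthogonal direct sum (R(P) ∩ R(P*)) ⊕ (N(P) ∩ N(P*)). (Equivalently, in the block decomposition H = R(P) ⊕ R(P)^⊥ in which P = [[I, P1],[0,0]], one has N(P − P*) = N(P1*) ⊕ N(P1).) -/
open ContinuousLinearMap

variable {H : Type*} [NormedAddCommGroup H] [InnerProductSpace ℂ H] [CompleteSpace H]

/-- For a bounded idempotent `P`, the kernel of `P − P*` is the orthogonal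
direct sum `(R(P) ∩ R(P*)) ⊕ (N(P) ∩ N(P*))`. -/
theorem ker_sub_adjoint (P : H →L[ℂ] H) (hP : P * P = P) :
    LinearMap.ker ((P - adjoint P : H →L[ℂ] H) : H →ₗ[ℂ] H) =
      (LinearMap.range (P : H →ₗ[ℂ] H) ⊓ LinearMap.range (adjoint P : H →ₗ[ℂ] H)) ⊔
        (LinearMap.ker (P : H →ₗ[ℂ] H) ⊓ LinearMap.ker (adjoint P : H →ₗ[ℂ] H)) ∧
    Submodule.IsOrtho (LinearMap.range (P : H →ₗ[ℂ] H) ⊓ LinearMap.range (adjoint P : H →ₗ[ℂ] H))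
      (LinearMap.ker (P : H →ₗ[ℂ] H) ⊓ LinearMap.ker (adjoint P : H →ₗ[ℂ] H)) := by
  have hPP : ∀ y, P (P y) = P y := fun y => congrArg (fun A => A y) hP
  have hQ : adjoint P * adjoint P = adjoint P := by
    have := congrArg adjoint hP
    rwa [show P * P = P.comp P from rfl, ContinuousLinearMap.adjoint_comp] at this
  have hQQ : ∀ y, adjoint P (adjoint P y) = adjoint P y :=
    fun y => congrArg (fun A => A y) hQ
  constructor
  · apply le_antisymm
    · intro x hx
      have hx0 : P x - adjoint P x = 0 := hx
      have hx' : P x = adjoint P x := sub_eq_zero.mp hx0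
      have h1 : P x ∈ LinearMap.range (P : H →ₗ[ℂ] H) ⊓ LinearMap.range (adjoint P : H →ₗ[ℂ] H) :=
        ⟨⟨x, rfl⟩, ⟨x, hx'.symm⟩⟩
      have h2 : x - P x ∈ LinearMap.ker (P : H →ₗ[ℂ] H) ⊓ LinearMap.ker (adjoint P : H →ₗ[ℂ] H) := by
        constructor
        · simp [LinearMap.mem_ker, map_sub, hPP x]
        · have : adjoint P (x - P x) = adjoint P x - adjoint P (P x) := map_sub _ _ _
          have h3 : adjoint P (P x) = P x := by rw [hx', hQQ, ← hx']
          simp [LinearMap.mem_ker, this, h3, ← hx']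
      have : x = P x + (x - P x) := by abel
      rw [this]
      exact Submodule.add_mem_sup h1 h2
    · rw [sup_le_iff]
      constructor
      · rintro x ⟨⟨u, rfl⟩, ⟨v, hv⟩⟩
        have h1 : P (P u) = P u := hPP u
        have h2 : adjoint P (P u) = P u := by have hv' : adjoint P v = P u := hv; rw [← hv', hQQ, hv']
        simp [LinearMap.mem_ker, sub_apply, h1, h2]
      · rintro x ⟨hx1, hx2⟩
        have h1 : P x = 0 := hx1
        have h2 : adjoint P x = 0 := hx2
        simp [LinearMap.mem_ker, sub_apply, h1, h2]
  · rw [Submodule.isOrtho_iff_inner_eq]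
    rintro u ⟨⟨w, rfl⟩, -⟩ v ⟨-, hv2⟩
    have h2 : adjoint P v = 0 := hv2
    change inner ℂ (P w) v = 0
    rw [← ContinuousLinearMap.adjoint_inner_right, h2, inner_zero_right]
end

section
/- Let P ∈ B(H) be a bounded idempotent and let S := { J ∈ B(H) : J is a symmetry and JPJ = P* }. Then the following are equivalent: (a) S has a maximum in the Loewner order (i.e., there exists J0 ∈ S with J ≤ J0 for all J ∈ S); (b) P is an orthogonal projection (P = P* = P²); (c) the identity operator I is the maximum of S in the Loewner order. -/
open ContinuousLinearMap
open scoped InnerProductSpace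

variable {H : Type*} [NormedAddCommGroup H] [InnerProductSpace ℂ H] [CompleteSpace H]

/-- A symmetry (self-adjoint involution): `J = J* = J⁻¹`. -/
def IsSymmetry (J : H →L[ℂ] H) : Prop := IsSelfAdjoint J ∧ J * J = 1

private lemma one_sub_symmetry_pos (J : H →L[ℂ] H) (hJ : IsSymmetry J) :
    ((1 : H →L[ℂ] H) - J).IsPositive := by
  obtain ⟨hsa, hsq⟩ := hJ
  have hAsa : IsSelfAdjoint ((1 : H →L[ℂ] H) - J) := ((IsSelfAdjoint.one (H →L[ℂ] H))).sub hsa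
  refine ⟨ContinuousLinearMap.isSelfAdjoint_iff_isSymmetric.mp hAsa, fun x => ?_⟩
  set A : H →L[ℂ] H := (1 : H →L[ℂ] H) - J with hA
  have hsq2 : A * A = (2 : ℂ) • A := by
    simp only [hA, mul_sub, sub_mul, one_mul, mul_one, hsq]
    ring_nf
    module
  have hx : A x = (2 : ℂ)⁻¹ • A (A x) := by
    have := congrArg (fun T => T x) hsq2
    simp only [ContinuousLinearMap.mul_apply, ContinuousLinearMap.smul_apply] at this
    rw [this, smul_smul]
    norm_num
  have key : (⟪A x, x⟫_ℂ : ℂ) = (2 : ℂ)⁻¹ * ⟪A x, A x⟫_ℂ := by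
    have h1 : ⟪A (A x), x⟫_ℂ = ⟪A x, A x⟫_ℂ := by
      nth_rewrite 1 [← hAsa.adjoint_eq]
      exact ContinuousLinearMap.adjoint_inner_left A x (A x)
    conv_lhs => rw [hx]
    rw [inner_smul_left, h1]
    congr 1
    simp [Complex.ext_iff]
  rw [ContinuousLinearMap.reApplyInnerSelf_apply, key]
  have h2 : RCLike.re ((2 : ℂ)⁻¹ * ⟪A x, A x⟫_ℂ) = 2⁻¹ * RCLike.re (⟪A x, A x⟫_ℂ) := by
    rw [inner_self_eq_norm_sq_to_K]
    norm_num
  rw [h2]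
  exact mul_nonneg (by norm_num) inner_self_nonneg

private lemma pos_symmetry_eq_one (J : H →L[ℂ] H) (hJ : IsSymmetry J)
    (hpos : ∀ x : H, 0 ≤ RCLike.re (⟪J x, x⟫_ℂ)) : J = 1 := by
  ext y
  have hx : J (y - J y) = -(y - J y) := by
    have := congrArg (fun T => T y) hJ.2
    simp only [ContinuousLinearMap.mul_apply, ContinuousLinearMap.one_apply] at this
    simp [map_sub, this]
  have h := hpos (y - J y)
  rw [hx, inner_neg_left] at h
  have h0 : RCLike.re (⟪y - J y, y - J y⟫_ℂ) ≤ 0 := by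
    simpa using h
  have hnorm : ‖y - J y‖ ^ 2 ≤ 0 := by
    rw [← inner_self_eq_norm_sq (𝕜 := ℂ)]
    exact h0
  have : y - J y = 0 := by
    have := sq_nonneg ‖y - J y‖
    have : ‖y - J y‖ = 0 := by nlinarith
    exact norm_eq_zero.mp this
  have := sub_eq_zero.mp this
  simpa using this.symm

/-- For the set `S` of symmetries `J` with `JPJ = P*`:
`S` has a Loewner maximum iff `P` is an orthogonal projection iff
the identity is the maximum of `S`. -/
theorem max_symmetry_JPJ_tfae (P : H →L[ℂ] H) (hP : P * P = P) :
    let S : Set (H →L[ℂ] H) := {J | IsSymmetry J ∧ J * P * J = adjoint P}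
    ((∃ J0 ∈ S, ∀ J ∈ S, (J0 - J).IsPositive) ↔ adjoint P = P) ∧
      (adjoint P = P ↔
        (1 : H →L[ℂ] H) ∈ S ∧ ∀ J ∈ S, ((1 : H →L[ℂ] H) - J).IsPositive) := by
  intro S
  have hone : ∀ hp : adjoint P = P, (1 : H →L[ℂ] H) ∈ S :=
    fun hp => ⟨⟨(IsSelfAdjoint.one (H →L[ℂ] H)), one_mul 1⟩, by simp [hp]⟩
  constructor
  · constructor
    · rintro ⟨J0, hJ0S, hmax⟩
      have hnegJ0 : -J0 ∈ S := by
        refine ⟨⟨hJ0S.1.1.neg, by rw [neg_mul_neg]; exact hJ0S.1.2⟩, ?_⟩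
        calc -J0 * P * -J0 = J0 * P * J0 := by rw [neg_mul, neg_mul_neg]
        _ = adjoint P := hJ0S.2
      have h := hmax (-J0) hnegJ0
      have hpos : ∀ x : H, 0 ≤ RCLike.re (⟪J0 x, x⟫_ℂ) := by
        intro x
        have h2 := h.2 x
        rw [ContinuousLinearMap.reApplyInnerSelf_apply] at h2
        simp only [sub_neg_eq_add, ContinuousLinearMap.add_apply, inner_add_left,
          map_add] at h2
        linarith
      have hJ01 : J0 = 1 := pos_symmetry_eq_one J0 hJ0S.1 hpos
      have := hJ0S.2
      rw [hJ01] at this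
      simpa using this.symm
    · intro hp
      exact ⟨1, hone hp, fun J hJ => one_sub_symmetry_pos J hJ.1⟩
  · constructor
    · intro hp
      exact ⟨hone hp, fun J hJ => one_sub_symmetry_pos J hJ.1⟩
    · rintro ⟨⟨_, h1⟩, _⟩
      simpa using h1.symm
end

section
/- Let P ∈ B(H) be a bounded idempotent and let S := { J ∈ B(H) : J is a symmetry and JPJ = P* }. Then the following are equivalent: (a) S has a minimum in the Loewner order (i.e., there exists J0 ∈ S with J0 ≤ J for all J ∈ S); (b) P is an orthogonal projection (P = P* = P²); (c) the operator −I is the minimum of S in the Loewner order. -/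
open ContinuousLinearMap

variable {H : Type*} [NormedAddCommGroup H] [InnerProductSpace ℂ H] [CompleteSpace H]

local notation "⟪" x ", " y "⟫" => @inner ℂ _ _ x y

lemma symmetry_sq_apply {J : H →L[ℂ] H} (hJ : IsSymmetry J) (x : H) : J (J x) = x := by
  have := congrFun (congrArg DFunLike.coe hJ.2) x
  simpa [ContinuousLinearMap.mul_apply] using this

lemma symmetry_norm_apply {J : H →L[ℂ] H} (hJ : IsSymmetry J) (x : H) : ‖J x‖ = ‖x‖ := by
  have h1 : ⟪J x, J x⟫ = ⟪x, x⟫ := by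
    have h0 : ⟪J (J x), x⟫ = ⟪J x, J x⟫ := by
      nth_rewrite 1 [← hJ.1.adjoint_eq]
      rw [adjoint_inner_left]
    rw [symmetry_sq_apply hJ] at h0
    exact h0.symm
  have h2 := congrArg RCLike.re h1
  rw [inner_self_eq_norm_sq, inner_self_eq_norm_sq] at h2
  exact (sq_eq_sq₀ (norm_nonneg _) (norm_nonneg _)).mp h2

lemma symmetry_sub_neg_one_pos {J : H →L[ℂ] H} (hJ : IsSymmetry J) :
    (J - (-1)).IsPositive := by
  constructor
  · have h1 : IsSelfAdjoint (1 : H →L[ℂ] H) := .one _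
    simpa [sub_neg_eq_add] using ContinuousLinearMap.isSelfAdjoint_iff_isSymmetric.mp (hJ.1.add h1)
  · intro x
    rw [reApplyInnerSelf_apply]
    have hx : (J - (-1)) x = J x + x := by
      simp [sub_apply, neg_apply, one_apply, sub_neg_eq_add]
    rw [hx, inner_add_left, map_add, inner_self_eq_norm_sq]
    have h2 : -(‖x‖ ^ 2) ≤ RCLike.re ⟪J x, x⟫ := by
      have ha := (abs_le.mp (Complex.abs_re_le_norm ⟪J x, x⟫)).1
      have hn : ‖⟪J x, x⟫‖ ≤ ‖x‖ ^ 2 := by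
        have hb := norm_inner_le_norm (𝕜 := ℂ) (J x) x
        rw [symmetry_norm_apply hJ] at hb
        calc ‖⟪J x, x⟫‖ ≤ ‖x‖ * ‖x‖ := hb
        _ = ‖x‖ ^ 2 := (sq ‖x‖).symm
      have : Complex.re ⟪J x, x⟫ = RCLike.re ⟪J x, x⟫ := rfl
      linarith [ha, hn, this.symm.le]
    linarith

lemma symmetry_eq_neg_one {J : H →L[ℂ] H} (hJ : IsSymmetry J)
    (hpos : ((-J) - J).IsPositive) : J = -1 := by
  have key : ∀ x : H, x + J x = 0 := by
    intro x
    set y := x + J x with hy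
    have hJy : J y = y := by
      simp [hy, map_add, symmetry_sq_apply hJ, add_comm]
    have hpy := hpos.2 y
    rw [reApplyInnerSelf_apply] at hpy
    have happ : ((-J) - J) y = (-(2 : ℂ)) • y := by
      simp only [sub_apply, neg_apply, hJy]
      module
    rw [happ, inner_smul_left] at hpy
    have hre : RCLike.re ((starRingEnd ℂ) (-(2:ℂ)) * ⟪y, y⟫) = -2 * ‖y‖^2 := by
      rw [inner_self_eq_norm_sq_to_K]
      simp [Complex.conj_ofNat]
      norm_cast
    rw [hre] at hpy
    have hle : ‖y‖ ^ 2 ≤ 0 := by linarith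
    have hy0 : ‖y‖ = 0 := by nlinarith [norm_nonneg y, sq_nonneg ‖y‖]
    exact norm_eq_zero.mp hy0
  ext x
  have h := key x
  have hJx : J x = -x := by
    have : J x = -x + (x + J x) := by abel
    rw [h] at this; simpa using this
  simp [hJx]

lemma neg_one_symmetry : IsSymmetry (-1 : H →L[ℂ] H) := by
  constructor
  · rw [IsSelfAdjoint]
    simp
  · simp

/-- For the set `S` of symmetries `J` with `JPJ = P*`:
`S` has a Loewner minimum iff `P` is an orthogonal projection iff
`−I` is the minimum of `S`. -/
theorem min_symmetry_JPJ_tfae (P : H →L[ℂ] H) (hP : P * P = P) :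
    let S : Set (H →L[ℂ] H) := {J | IsSymmetry J ∧ J * P * J = adjoint P}
    ((∃ J0 ∈ S, ∀ J ∈ S, (J - J0).IsPositive) ↔ adjoint P = P) ∧
      (adjoint P = P ↔
        (-1 : H →L[ℂ] H) ∈ S ∧ ∀ J ∈ S, (J - (-1 : H →L[ℂ] H)).IsPositive) := by
  intro S
  have hm1 : ∀ Q : H →L[ℂ] H, (-1) * Q * (-1) = Q := by
    intro Q; rw [neg_one_mul, mul_neg_one, neg_neg]
  have hmem_neg : ∀ J, J ∈ S → (-J) ∈ S := by
    rintro J ⟨⟨hsa, hsq⟩, hcom⟩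
    refine ⟨⟨hsa.neg, by rw [neg_mul_neg]; exact hsq⟩, ?_⟩
    calc (-J) * P * (-J) = J * P * J := by rw [neg_mul, neg_mul_neg]
    _ = adjoint P := hcom
  have hneg_one_min : adjoint P = P →
      (-1 : H →L[ℂ] H) ∈ S ∧ ∀ J ∈ S, (J - (-1 : H →L[ℂ] H)).IsPositive := by
    intro hPsa
    exact ⟨⟨neg_one_symmetry, by rw [hm1 P, hPsa]⟩,
      fun J hJ => symmetry_sub_neg_one_pos hJ.1⟩
  constructor
  · constructor
    · rintro ⟨J0, hJ0, hmin⟩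
      have hpos := hmin (-J0) (hmem_neg J0 hJ0)
      have hJ0eq : J0 = -1 := symmetry_eq_neg_one hJ0.1 hpos
      have h2 := hJ0.2
      rw [hJ0eq, hm1 P] at h2
      exact h2.symm
    · intro hPsa
      obtain ⟨hm, hmin⟩ := hneg_one_min hPsa
      exact ⟨-1, hm, hmin⟩
  · constructor
    · exact hneg_one_min
    · rintro ⟨hm, _⟩
      have := hm.2
      rw [hm1 P] at this
      exact this.symm
end

section
/- For every bounded idempotent P ∈ B(H) there exists a symmetry J ∈ B(H) such that JPJ = P*. (For instance, with respect to the decomposition H = R(P) ⊕ R(P)^⊥, writing P = [[I, P1],[0,0]] and T = (I + P1 P1*)^{1/2}, the operator J with block matrix [[−T^{-1}, −T^{-1}P1],[−P1*T^{-1}, (I + P1*P1)^{-1/2}]] is such a symmetry.) -/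
open ContinuousLinearMap

section Abstract

variable {A : Type*} [CStarAlgebra A]

/-- If `x` commutes with `b`, then `x` commutes with `cfc f b`. -/
lemma commute_cfc_of_commute {b x : A} (hbx : Commute b x)
    (f : ℝ → ℝ) : Commute (cfc f b) x := by
  refine cfc_cases (fun y => Commute y x) b f (Commute.zero_left x) fun hf hb' => ?_
  suffices h : ∀ g : C(spectrum ℝ b, ℝ), Commute (cfcHom hb' g) x by exact h _
  intro g
  let S : Subalgebra ℝ C(spectrum ℝ b, ℝ) :=
  { carrier := {g | Commute (cfcHom hb' g) x}
    mul_mem' := fun {g₁ g₂} h1 h2 => by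
      simpa only [Set.mem_setOf_eq, map_mul] using h1.mul_left h2
    add_mem' := fun {g₁ g₂} h1 h2 => by
      simpa only [Set.mem_setOf_eq, map_add] using h1.add_left h2
    algebraMap_mem' := fun r => by
      show Commute (cfcHom hb' (algebraMap ℝ _ r)) x
      rw [AlgHomClass.commutes]
      exact Algebra.commutes r x }
  have hclosed : IsClosed (S : Set C(spectrum ℝ b, ℝ)) := by
    have hc : Continuous (cfcHom hb' (R := ℝ)) := (cfcHom_isClosedEmbedding hb').continuous
    have h2 : IsClosed {y : A | y * x = x * y} :=
      isClosed_eq (continuous_id.mul continuous_const) (continuous_const.mul continuous_id)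
    exact h2.preimage hc
  have hX : polynomialFunctions (spectrum ℝ b) ≤ S := by
    rw [polynomialFunctions.eq_adjoin_X]
    refine Algebra.adjoin_le ?_
    rintro g hg
    rw [Set.mem_singleton_iff] at hg
    subst hg
    show Commute (cfcHom hb' _) x
    have hid : (Polynomial.toContinuousMapOnAlgHom (spectrum ℝ b) Polynomial.X) =
        (ContinuousMap.restrict (spectrum ℝ b) (ContinuousMap.id ℝ)) := by
      ext z; simp
    rw [hid, cfcHom_id hb']
    exact hbx
  have htop : (polynomialFunctions (spectrum ℝ b)).topologicalClosure ≤ S :=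
    Subalgebra.topologicalClosure_minimal hX hclosed
  exact htop (by rw [polynomialFunctions.topologicalClosure]; trivial)

variable [PartialOrder A] [StarOrderedRing A]

lemma exists_symmetry_abstract (P : A) (hP : P * P = P) :
    ∃ J : A, IsSelfAdjoint J ∧ J * J = 1 ∧ J * P * J = star P := by
  have hPs : star P * star P = star P := by rw [← star_mul, hP]
  set d : A := P + star P - 1 with hd_def
  have hd : IsSelfAdjoint d := by
    simp only [IsSelfAdjoint, hd_def, star_sub, star_add, star_star, star_one]
    abel
  have key1 : d * P = star P * d := by
    simp only [hd_def, sub_mul, add_mul, mul_sub, mul_add, hP, hPs, one_mul, mul_one]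
    abel
  have key2 : P * d = d * star P := by
    simp only [hd_def, sub_mul, add_mul, mul_sub, mul_add, hP, hPs, one_mul, mul_one]
    abel
  have hcomm : Commute (d * d) P := by
    show d * d * P = P * (d * d)
    calc d * d * P = d * (star P * d) := by rw [mul_assoc, key1]
      _ = (d * star P) * d := by rw [mul_assoc]
      _ = (P * d) * d := by rw [key2]
      _ = P * (d * d) := by rw [mul_assoc]
  have hdd_sa : IsSelfAdjoint (d * d) := by
    rw [IsSelfAdjoint, star_mul, hd.star_eq]
  have hone_le : (1 : A) ≤ d * d := by
    have hexp : d * d - 1 = (P - star P) * star (P - star P) := by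
      simp only [star_sub, star_star, hd_def, sub_mul, add_mul, mul_sub, mul_add, hP, hPs,
        one_mul, mul_one]
      abel
    rw [← sub_nonneg, hexp]
    exact mul_star_self_nonneg _
  have hspec : ∀ x ∈ spectrum ℝ (d * d), (1 : ℝ) ≤ x := by
    have := (algebraMap_le_iff_le_spectrum (R := ℝ) (a := d * d) hdd_sa).mp (by rwa [map_one])
    exact this
  have hpos : ∀ x ∈ spectrum ℝ (d * d), Real.sqrt x ≠ 0 := by
    intro x hx
    have h1 : (1 : ℝ) ≤ x := hspec x hx
    positivity
  have hf : ContinuousOn (fun x : ℝ => (Real.sqrt x)⁻¹) (spectrum ℝ (d * d)) :=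
    ContinuousOn.inv₀ Real.continuous_sqrt.continuousOn hpos
  set s : A := cfc (fun x : ℝ => (Real.sqrt x)⁻¹) (d * d) with hs_def
  have hs_sa : IsSelfAdjoint s := cfc_predicate _ _
  have hss : s * s * (d * d) = 1 := by
    rw [hs_def, ← cfc_mul _ _ (d * d) hf hf]
    nth_rewrite 2 [← cfc_id ℝ (d * d) hdd_sa]
    rw [← cfc_mul (fun x : ℝ => (Real.sqrt x)⁻¹ * (Real.sqrt x)⁻¹) _ (d * d) (hf.mul hf) continuousOn_id]
    rw [show (1 : A) = algebraMap ℝ A 1 by rw [map_one], ← cfc_const (1 : ℝ) (d * d) hdd_sa]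
    apply cfc_congr
    intro x hx
    have h1 : (1 : ℝ) ≤ x := hspec x hx
    have h0 : (0 : ℝ) < x := lt_of_lt_of_le one_pos h1
    show (Real.sqrt x)⁻¹ * (Real.sqrt x)⁻¹ * x = 1
    rw [← mul_inv, Real.mul_self_sqrt h0.le]
    field_simp
  have hsP : Commute s P := commute_cfc_of_commute hcomm _
  have hsd : Commute s d := by
    refine commute_cfc_of_commute ?_ _
    show d * d * d = d * (d * d)
    rw [mul_assoc]
  have hdds : d * d * (s * s) = 1 := by
    have hcss : Commute (s * s) (d * d) := ((hsd.mul_left hsd).mul_right (hsd.mul_left hsd))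
    rw [← hcss.eq, hss]
  refine ⟨d * s, ?_, ?_, ?_⟩
  · rw [IsSelfAdjoint, star_mul, hs_sa.star_eq, hd.star_eq, hsd.eq]
  · calc d * s * (d * s) = d * (s * d) * s := by rw [mul_assoc, mul_assoc, mul_assoc]
      _ = d * (d * s) * s := by rw [hsd.eq]
      _ = d * d * (s * s) := by rw [mul_assoc, mul_assoc, mul_assoc]
      _ = 1 := hdds
  · calc d * s * P * (d * s) = d * (s * P) * (d * s) := by rw [mul_assoc d s P]
      _ = d * (P * s) * (d * s) := by rw [hsP.eq]
      _ = (d * P) * (s * d) * s := by simp only [mul_assoc]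
      _ = (d * P) * (d * s) * s := by rw [hsd.eq]
      _ = (star P * d) * (d * s) * s := by rw [key1]
      _ = star P * (d * d * (s * s)) := by simp only [mul_assoc]
      _ = star P := by rw [hdds, mul_one]

end Abstract

variable {H : Type*} [NormedAddCommGroup H] [InnerProductSpace ℂ H] [CompleteSpace H]

/-- For every bounded idempotent `P` there is a symmetry `J` with `JPJ = P*`. -/
theorem exists_symmetry_JPJ (P : H →L[ℂ] H) (hP : P * P = P) :
    ∃ J : H →L[ℂ] H, IsSymmetry J ∧ J * P * J = adjoint P := by
  obtain ⟨J, h1, h2, h3⟩ := exists_symmetry_abstract P hP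
  exact ⟨J, ⟨h1, h2⟩, by rw [h3, ← star_eq_adjoint]⟩
end

section
/- Let K be a complex Hilbert space and A ∈ B(K, H) a bounded operator. Then the operator J0 := I − 2·P_A (equivalently, 2·P_{N(A*)} − I) is a symmetry satisfying J0 A = −A, and every symmetry J ∈ B(H) with JA = −A satisfies J ≤ J0 in the Loewner order; that is, J0 is the maximum of the set of symmetries J with JA = −A. -/
open ContinuousLinearMap

variable {H K : Type*} [NormedAddCommGroup H] [InnerProductSpace ℂ H] [CompleteSpace H]
  [NormedAddCommGroup K] [InnerProductSpace ℂ K] [CompleteSpace K]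

/-- The orthogonal projection onto a closed subspace `M`, as an operator on `H`. -/
noncomputable def oproj (M : Submodule ℂ H) (hM : IsClosed (M : Set H)) : H →L[ℂ] H :=
  haveI : CompleteSpace M := hM.completeSpace_coe
  M.subtypeL ∘L M.orthogonalProjectionOnto

/-- The orthogonal projection onto the closure of the range of an operator. -/
noncomputable def rangeProj (A : K →L[ℂ] H) : H →L[ℂ] H :=
  oproj (LinearMap.range (A : K →ₗ[ℂ] H)).topologicalClosure (Submodule.isClosed_topologicalClosure _)

/-- The orthogonal projection onto the kernel of an operator. -/
noncomputable def kerProj (A : H →L[ℂ] K) : H →L[ℂ] H :=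
  oproj (LinearMap.ker (A : H →ₗ[ℂ] K)) (ContinuousLinearMap.isClosed_ker A)

lemma oproj_congr {M N : Submodule ℂ H} (h : M = N) (hM : IsClosed (M : Set H))
    (hN : IsClosed (N : Set H)) : oproj M hM = oproj N hN := by subst h; rfl

lemma oproj_apply (M : Submodule ℂ H) (hM : IsClosed (M : Set H)) (x : H) :
    haveI : CompleteSpace M := hM.completeSpace_coe
    oproj M hM x = (M.orthogonalProjectionOnto x : H) := rfl

/-- `J0 = I − 2 P_A = 2 P_{N(A*)} − I` is the Loewner maximum of the set of
symmetries `J` with `JA = −A`. -/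
theorem max_symmetry_neg (A : K →L[ℂ] H) :
    let J0 : H →L[ℂ] H := 1 - 2 • rangeProj A
    IsSymmetry J0 ∧ J0 = 2 • kerProj (adjoint A) - 1 ∧ J0 ∘L A = -A ∧
      ∀ J : H →L[ℂ] H, IsSymmetry J → J ∘L A = -A → (J0 - J).IsPositive := by
  intro J0
  set M : Submodule ℂ H := (LinearMap.range (A : K →ₗ[ℂ] H)).topologicalClosure with hMdef
  have hMclosed : IsClosed (M : Set H) := Submodule.isClosed_topologicalClosure _
  haveI : CompleteSpace M := hMclosed.completeSpace_coe
  set P : H →L[ℂ] H := rangeProj A with hPdef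
  have hPapply : ∀ x : H, P x = (M.orthogonalProjectionOnto x : H) := fun x => rfl
  have hPmem : ∀ x : H, P x ∈ M := fun x => by rw [hPapply]; exact (M.orthogonalProjectionOnto x).2
  have hPid : ∀ x ∈ M, P x = x := by
    intro x hx
    rw [hPapply]
    exact congrArg _ (Submodule.orthogonalProjectionOnto_mem_subspace_eq_self (⟨x, hx⟩ : M))
  have hPsa : IsSelfAdjoint P := by exact isSelfAdjoint_starProjection M
  have hPP : ∀ x, P (P x) = P x := fun x => hPid _ (hPmem x)
  have horth : ∀ x : H, x - P x ∈ Mᗮ := fun x => by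
    rw [hPapply]; exact M.sub_starProjection_mem_orthogonal x
  have hJ0 : J0 = 1 - (P + P) := by
    rw [show J0 = 1 - 2 • rangeProj A from rfl, ← hPdef, two_smul]
  -- J0 is a symmetry
  have hJ0sa : IsSelfAdjoint J0 := by
    rw [hJ0, IsSelfAdjoint, star_sub, star_one, star_add, hPsa.star_eq]
  have hJ0inv : J0 * J0 = 1 := by
    ext x
    simp only [hJ0, mul_apply_eq_comp, one_apply_eq_self, sub_apply, add_apply, map_sub, map_add, hPP]
    abel
  refine ⟨⟨hJ0sa, hJ0inv⟩, ?_, ?_, ?_⟩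
  · -- J0 = 2 • kerProj (adjoint A) - 1
    have hker : LinearMap.ker (adjoint A : H →ₗ[ℂ] K) = Mᗮ := by
      have hMo : Mᗮ = (LinearMap.range (A : K →ₗ[ℂ] H))ᗮ := by
        rw [hMdef, ← Submodule.orthogonal_orthogonal_eq_closure,
          Submodule.triorthogonal_eq_orthogonal]
      rw [hMo]
      ext x
      simp only [LinearMap.mem_ker, Submodule.mem_orthogonal, ContinuousLinearMap.coe_coe]
      constructor
      · rintro hx u ⟨y, rfl⟩
        rw [ContinuousLinearMap.coe_coe, ← adjoint_inner_right, hx, inner_zero_right]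
      · intro hx
        have h : ∀ y : K, inner ℂ y (adjoint A x) = (0 : ℂ) := fun y => by
          rw [adjoint_inner_right]; exact hx _ ⟨y, rfl⟩
        have := h (adjoint A x)
        rwa [inner_self_eq_zero] at this
    have hkp : kerProj (adjoint A) = oproj Mᗮ (Submodule.isClosed_orthogonal M) :=
      oproj_congr hker _ _
    ext x
    have hov : (Mᗮ.orthogonalProjectionOnto x : H) = x - (M.orthogonalProjectionOnto x : H) := by
      exact M.starProjection_orthogonal_val x
    rw [hJ0]
    simp only [sub_apply, add_apply, smul_apply, one_apply_eq_self, two_smul, hkp, oproj_apply, hov,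
      ← hPapply]
    abel
  · -- J0 ∘L A = -A
    ext v
    have hAv : A v ∈ M := Submodule.le_topologicalClosure _ (LinearMap.mem_range_self (A : K →ₗ[ℂ] H) v)
    rw [hJ0]
    simp only [comp_apply, sub_apply, add_apply, one_apply_eq_self, neg_apply, hPid _ hAv]
    abel
  · -- maximality
    intro J hJ hJA
    have hJsa := hJ.1
    have hJadj : ∀ x y : H, (inner ℂ (J x) y : ℂ) = inner ℂ x (J y) := fun x y => by
      conv_lhs => rw [← hJsa.adjoint_eq]
      rw [adjoint_inner_left]
    have hJJ : ∀ x, J (J x) = x := fun x => by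
      have := congrFun (congrArg DFunLike.coe hJ.2) x
      simpa [mul_apply] using this
    have hJnorm : ∀ x : H, ‖J x‖ = ‖x‖ := by
      intro x
      have h1 : (inner ℂ (J x) (J x) : ℂ) = inner ℂ x x := by
        rw [hJadj, hJJ]
      have h2 := congrArg RCLike.re h1
      rw [inner_self_eq_norm_sq, inner_self_eq_norm_sq] at h2
      nlinarith [norm_nonneg (J x), norm_nonneg x]
    -- J = -1 on M
    have hJM : ∀ m ∈ M, J m = -m := by
      have hle : M ≤ LinearMap.ker ((J + 1 : H →L[ℂ] H) : H →ₗ[ℂ] H) := by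
        apply Submodule.topologicalClosure_minimal
        · rintro u ⟨v, rfl⟩
          simp only [SetLike.mem_coe, LinearMap.mem_ker, ContinuousLinearMap.coe_coe, add_apply, one_apply_eq_self]
          have := congrFun (congrArg DFunLike.coe hJA) v
          simp only [comp_apply, neg_apply] at this
          rw [this]; abel
        · exact isClosed_ker _
      intro m hm
      have := hle hm
      simp only [LinearMap.mem_ker, ContinuousLinearMap.coe_coe, add_apply, one_apply_eq_self] at this
      linear_combination (norm := module) this
    -- J preserves Mᗮ
    have hJMo : ∀ w ∈ Mᗮ, J w ∈ Mᗮ := by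
      intro w hw
      rw [Submodule.mem_orthogonal]
      intro u hu
      rw [← hJadj, hJM u hu, inner_neg_left,
        Submodule.inner_right_of_mem_orthogonal hu hw, neg_zero]
    constructor
    · exact isSelfAdjoint_iff_isSymmetric.mp (hJ0sa.sub hJsa)
    · intro x
      have hmM : P x ∈ M := hPmem x
      have hwMo : x - P x ∈ Mᗮ := horth x
      have hJPx : J (P x) = -(P x) := hJM _ hmM
      have hJ0x : J0 x = x - (P x + P x) := by
        rw [hJ0]; simp only [sub_apply, add_apply, one_apply_eq_self]
      have hkey : (J0 - J) x = (x - P x) - J (x - P x) := by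
        rw [sub_apply, hJ0x, map_sub, hJPx]; abel
      rw [reApplyInnerSelf_apply, hkey]
      set w : H := x - P x with hw
      have hxd : x = P x + w := by rw [hw]; abel
      have h1 : (inner ℂ w (P x) : ℂ) = 0 :=
        Submodule.inner_left_of_mem_orthogonal hmM hwMo
      have h2 : (inner ℂ (J w) (P x) : ℂ) = 0 :=
        Submodule.inner_left_of_mem_orthogonal hmM (hJMo w hwMo)
      have hinner : (inner ℂ (w - J w) x : ℂ) = inner ℂ w w - inner ℂ (J w) w := by
        conv_lhs => rw [hxd]
        rw [inner_sub_left, inner_add_right, inner_add_right, h1, h2]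
        ring
      rw [hinner, map_sub, inner_self_eq_norm_sq]
      have hb : RCLike.re (inner ℂ (J w) w : ℂ) ≤ ‖w‖ ^ 2 := by
        calc RCLike.re (inner ℂ (J w) w : ℂ) ≤ ‖J w‖ * ‖w‖ := re_inner_le_norm _ _
          _ = ‖w‖ ^ 2 := by rw [hJnorm]; ring
      linarith
end

section
/- Let P ∈ B(H) be a bounded idempotent. Then P is unitarily equivalent to P*, i.e., there exists a unitary operator U ∈ B(H) such that P = U* P* U. -/
open ContinuousLinearMap

variable {H : Type*} [NormedAddCommGroup H] [InnerProductSpace ℂ H] [CompleteSpace H]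

private lemma commute_cfc_aux {a b : H →L[ℂ] H} (ha : IsSelfAdjoint a)
    (hab : Commute b a) (f : ℝ → ℝ) : Commute b (cfc f a) := by
  by_cases hf : ContinuousOn f (spectrum ℝ a)
  · rw [cfc_apply f a ha hf]
    set g : C(spectrum ℝ a, ℝ) := ⟨_, hf.restrict⟩
    have hclosed : IsClosed {x : H →L[ℂ] H | Commute b x} := by
      have : {x : H →L[ℂ] H | Commute b x} = (fun x => b * x - x * b) ⁻¹' {0} := by
        ext x; simp [Commute, SemiconjBy, sub_eq_zero]
      rw [this]
      exact isClosed_singleton.preimage (by fun_prop)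
    let K : Subalgebra ℝ C(spectrum ℝ a, ℝ) :=
      (Subalgebra.centralizer ℝ {b}).comap
        ((cfcHom ha (R := ℝ)) : C(spectrum ℝ a, ℝ) →ₐ[ℝ] (H →L[ℂ] H))
    have hKclosed : IsClosed (K : Set C(spectrum ℝ a, ℝ)) := by
      have : (K : Set C(spectrum ℝ a, ℝ))
          = (cfcHom ha (R := ℝ)) ⁻¹' {x : H →L[ℂ] H | Commute b x} := by
        ext x
        simp [K, Subalgebra.mem_centralizer_iff, Commute, SemiconjBy, eq_comm,
          Set.mem_centralizer_iff]
      rw [this]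
      exact hclosed.preimage (cfcHom_isClosedEmbedding ha).continuous
    have hpoly : polynomialFunctions (spectrum ℝ a) ≤ K := by
      rw [polynomialFunctions.eq_adjoin_X]
      apply Algebra.adjoin_le
      rintro x ⟨⟩
      simp only [Subalgebra.mem_comap, K, Subalgebra.mem_centralizer_iff]
      rintro c ⟨⟩
      have h1 : (Polynomial.toContinuousMapOnAlgHom (spectrum ℝ a) Polynomial.X :
          C(spectrum ℝ a, ℝ)) = ContinuousMap.restrict (spectrum ℝ a) (ContinuousMap.id ℝ) :=
        Polynomial.toContinuousMapOn_X_eq_restrict_id _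
      show b * (cfcHom ha) _ = (cfcHom ha) _ * b
      rw [h1, cfcHom_id ha]
      exact hab
    have htop : K = ⊤ := by
      rw [← top_le_iff, ← polynomialFunctions.topologicalClosure (spectrum ℝ a)]
      exact Subalgebra.topologicalClosure_minimal hpoly hKclosed
    have hg : g ∈ K := htop ▸ Algebra.mem_top
    exact (Subalgebra.mem_centralizer_iff ℝ).mp ((Subalgebra.mem_comap _ _ _).mp hg) b rfl
  · rw [cfc_apply_of_not_continuousOn a hf]
    exact Commute.zero_right b

/-- Every bounded idempotent is unitarily equivalent to its adjoint. -/
theorem idem_unitarily_equiv_adjoint (P : H →L[ℂ] H) (hP : P * P = P) :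
    ∃ U ∈ unitary (H →L[ℂ] H), P = adjoint U * adjoint P * U := by
  have hPs : star P * star P = star P := by rw [← star_mul, hP]
  set T : H →L[ℂ] H := P + star P - 1 with hTdef
  have hT : star T = T := by
    simp only [hTdef, star_sub, star_add, star_one, star_star]
    abel
  have hTP : T * P = star P * T := by
    simp only [hTdef, sub_mul, mul_sub, add_mul, mul_add, one_mul, mul_one, hP, hPs]
    abel
  have hTP' : T * star P = P * T := by
    simp only [hTdef, sub_mul, mul_sub, add_mul, mul_add, one_mul, mul_one, hP, hPs]
    abel
  set S : H →L[ℂ] H := T * T with hSdef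
  have hS_sa : IsSelfAdjoint S := by rw [IsSelfAdjoint, hSdef, star_mul, hT]
  have hS_nonneg : (0 : H →L[ℂ] H) ≤ S := by
    rw [hSdef]; nth_rw 1 [← hT]; exact star_mul_self_nonneg T
  have hSP : Commute P S := by
    have : S * P = P * S := by
      calc S * P = T * (T * P) := by rw [hSdef, mul_assoc]
        _ = (T * star P) * T := by rw [hTP, mul_assoc]
        _ = P * S := by rw [hTP', hSdef, mul_assoc]
    exact this.symm
  have hS_unit : IsUnit S := by
    set D : H →L[ℂ] H := P - star P with hDdef
    have hSD : S = 1 + star D * D := by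
      simp only [hSdef, hDdef, hTdef, star_sub, star_star, sub_mul, mul_sub, add_mul, mul_add,
        one_mul, mul_one, hP, hPs]
      abel
    have hnn : (0 : H →L[ℂ] H) ≤ star D * D := star_mul_self_nonneg D
    have hspec : (-1 : ℝ) ∉ spectrum ℝ (star D * D) := fun h => by
      have := spectrum_nonneg_of_nonneg hnn h
      linarith
    rw [spectrum.notMem_iff] at hspec
    rw [hSD]
    have : algebraMap ℝ (H →L[ℂ] H) (-1) - star D * D = -(1 + star D * D) := by
      simp [map_neg, map_one]; abel
    rw [this] at hspec
    exact (IsUnit.neg_iff _).mp hspec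
  set R : H →L[ℂ] H := cfc Real.sqrt S with hRdef
  have hR_sa : IsSelfAdjoint R := cfc_predicate Real.sqrt S
  have hRR : R * R = S := by
    rw [hRdef, ← cfc_mul Real.sqrt Real.sqrt S]
    have : cfc (fun x => Real.sqrt x * Real.sqrt x) S = cfc (fun x : ℝ => x) S := by
      apply cfc_congr
      intro x hx
      exact Real.mul_self_sqrt (spectrum_nonneg_of_nonneg hS_nonneg hx)
    rw [this, cfc_id' ℝ S]
  have hPR : Commute P R := commute_cfc_aux hS_sa hSP Real.sqrt
  have hTR : Commute T R := by
    refine commute_cfc_aux hS_sa ?_ Real.sqrt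
    show T * S = S * T
    rw [hSdef, mul_assoc]
  have hR_unit : IsUnit R := by
    rcases hS_unit with ⟨v, hv⟩
    refine isUnit_iff_exists.mpr ⟨R * ↑v⁻¹, ?_, ?_⟩
    · calc R * (R * ↑v⁻¹) = S * ↑v⁻¹ := by rw [← mul_assoc, hRR]
        _ = 1 := by rw [← hv]; exact v.mul_inv
    · have hcomm : Commute R (↑v⁻¹ : H →L[ℂ] H) := by
        have : Commute R ↑v := by
          rw [hv]
          show R * S = S * R
          rw [← hRR, mul_assoc, ← mul_assoc]
        exact this.units_inv_right
      calc (R * ↑v⁻¹) * R = R * (↑v⁻¹ * R) := by rw [mul_assoc]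
        _ = R * (R * ↑v⁻¹) := by rw [hcomm.eq]
        _ = S * ↑v⁻¹ := by rw [← mul_assoc, hRR]
        _ = 1 := by rw [← hv]; exact v.mul_inv
  set u : (H →L[ℂ] H)ˣ := hR_unit.unit with hudef
  have hu : (↑u : H →L[ℂ] H) = R := hR_unit.unit_spec
  have h1 : (↑u⁻¹ : H →L[ℂ] H) * R = 1 := by rw [← hu]; exact u.inv_mul
  have h2 : R * (↑u⁻¹ : H →L[ℂ] H) = 1 := by rw [← hu]; exact u.mul_inv
  have hstar_uinv : star (↑u⁻¹ : H →L[ℂ] H) = ↑u⁻¹ := by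
    have h3 : star (↑u⁻¹ : H →L[ℂ] H) * R = 1 := by
      nth_rw 1 [← hR_sa.star_eq]
      rw [← star_mul, h2, star_one]
    calc star (↑u⁻¹ : H →L[ℂ] H) = star ↑u⁻¹ * (R * ↑u⁻¹) := by rw [h2, mul_one]
      _ = (star ↑u⁻¹ * R) * ↑u⁻¹ := by rw [mul_assoc]
      _ = ↑u⁻¹ := by rw [h3, one_mul]
  have hTu : Commute T (↑u⁻¹ : H →L[ℂ] H) := by
    have : Commute T (↑u : H →L[ℂ] H) := by rw [hu]; exact hTR
    exact this.units_inv_right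
  have hPsu : Commute (star P) (↑u⁻¹ : H →L[ℂ] H) := by
    have : Commute (star P) (↑u : H →L[ℂ] H) := by
      rw [hu, ← hR_sa.star_eq]
      exact hPR.star_star
    exact this.units_inv_right
  have hRR2 : T * T = R * R := by rw [hRR]
  set U : H →L[ℂ] H := ↑u⁻¹ * T with hUdef
  have hUstar : star U = T * ↑u⁻¹ := by rw [hUdef, star_mul, hT, hstar_uinv]
  have hsUU : star U * U = 1 := by
    calc star U * U = (T * ↑u⁻¹) * (↑u⁻¹ * T) := by rw [hUstar, hUdef]
      _ = (↑u⁻¹ * T) * (↑u⁻¹ * T) := by rw [hTu.eq]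
      _ = ↑u⁻¹ * ((T * ↑u⁻¹) * T) := by simp only [mul_assoc]
      _ = ↑u⁻¹ * ((↑u⁻¹ * T) * T) := by rw [hTu.eq]
      _ = ↑u⁻¹ * (↑u⁻¹ * (T * T)) := by simp only [mul_assoc]
      _ = ↑u⁻¹ * (↑u⁻¹ * (R * R)) := by rw [hRR2]
      _ = ↑u⁻¹ * ((↑u⁻¹ * R) * R) := by simp only [mul_assoc]
      _ = 1 := by rw [h1, one_mul]; exact h1
  have hUsU : U * star U = 1 := by
    calc U * star U = ↑u⁻¹ * (T * (T * ↑u⁻¹)) := by rw [hUstar, hUdef, mul_assoc]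
      _ = ↑u⁻¹ * ((T * T) * ↑u⁻¹) := by simp only [mul_assoc]
      _ = ↑u⁻¹ * ((R * R) * ↑u⁻¹) := by rw [hRR2]
      _ = (↑u⁻¹ * R) * (R * ↑u⁻¹) := by simp only [mul_assoc]
      _ = 1 := by rw [h1, h2, one_mul]
  refine ⟨U, Unitary.mem_iff.mpr ⟨hsUU, hUsU⟩, ?_⟩
  rw [← star_eq_adjoint, ← star_eq_adjoint]
  have hkey : star P * U = U * P := by
    calc star P * U = (star P * ↑u⁻¹) * T := by rw [hUdef, mul_assoc]
      _ = (↑u⁻¹ * star P) * T := by rw [hPsu.eq]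
      _ = ↑u⁻¹ * (star P * T) := by rw [mul_assoc]
      _ = ↑u⁻¹ * (T * P) := by rw [hTP]
      _ = U * P := by rw [hUdef, mul_assoc]
  calc P = (star U * U) * P := by rw [hsUU, one_mul]
    _ = star U * (U * P) := by rw [mul_assoc]
    _ = star U * (star P * U) := by rw [hkey]
    _ = star U * star P * U := by rw [mul_assoc]
end

section
/- Let P ∈ B(H) be a bounded idempotent. Then the range of P + P* is closed if and only if the range of 2I − P − P* is closed. -/
set_option maxHeartbeats 8000000

open ContinuousLinearMap

variable {H : Type*} [NormedAddCommGroup H] [InnerProductSpace ℂ H] [CompleteSpace H]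

local notation "⟪" x ", " y "⟫" => @inner ℂ _ _ x y

lemma approx_eigen (B : H →L[ℂ] H) (hB : IsSelfAdjoint B) {l : ℝ} (hl : l ∈ spectrum ℝ B)
    {η : ℝ} (hη : 0 < η) : ∃ x : H, ‖x‖ = 1 ∧ ‖B x - (l : ℂ) • x‖ ≤ η := by
  by_contra h
  push_neg at h
  set S : H →L[ℂ] H := B - (l : ℂ) • 1 with hSdef
  have hSapp : ∀ x : H, S x = B x - (l : ℂ) • x := by intro x; simp [hSdef]
  have hSsa : IsSelfAdjoint S := by
    refine hB.sub ?_
    rw [isSelfAdjoint_iff]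
    simp [star_smul, Complex.star_def, Complex.conj_ofReal]
  have hbdd : ∀ x : H, ‖x‖ ≤ η⁻¹ * ‖S x‖ := by
    intro x
    rcases eq_or_ne x 0 with rfl | hx
    · simp
    · have hn : (0:ℝ) < ‖x‖ := norm_pos_iff.2 hx
      have h1 := h (‖x‖⁻¹ • x) (by simp [norm_smul, inv_mul_cancel₀ hn.ne'])
      have h2 : B (‖x‖⁻¹ • x) - (l:ℂ) • (‖x‖⁻¹ • x) = ‖x‖⁻¹ • S x := by
        rw [← hSapp, map_smul_of_tower]
      rw [h2, norm_smul, Real.norm_eq_abs, abs_of_pos (inv_pos.2 hn), inv_mul_eq_div,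
        lt_div_iff₀ hn] at h1
      rw [inv_mul_eq_div, le_div_iff₀ hη]
      linarith
  have ha : AntilipschitzWith (⟨η⁻¹, by positivity⟩ : NNReal) S :=
    S.antilipschitz_of_bound fun x => hbdd x
  have hunit : IsUnit S := by
    rw [isUnit_iff_bijective, bijective_iff_dense_range_and_antilipschitz S]
    refine ⟨?_, ⟨_, ha⟩⟩
    have _inst := ha.completeSpace_range_clm
    rw [Submodule.topologicalClosure_eq_top_iff, Submodule.eq_bot_iff]
    intro x hx
    have hSx : S x = 0 := by
      have h1 := hx (S (S x)) ⟨S x, rfl⟩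
      have h2 : ⟪adjoint S (S x), x⟫ = ⟪S x, S x⟫ := adjoint_inner_left S x (S x)
      rw [hSsa.adjoint_eq] at h2
      exact inner_self_eq_zero.mp (h2.symm.trans h1)
    have := hbdd x
    rw [hSx] at this
    simpa using le_antisymm (by simpa using this) (norm_nonneg x)
  refine spectrum.notMem_iff.mpr ?_ hl
  have : algebraMap ℝ (H →L[ℂ] H) l - B = -S := by
    rw [hSdef, Algebra.algebraMap_eq_smul_one, neg_sub, Complex.coe_smul]
  rw [this]
  exact hunit.neg

lemma isClosed_range_of_gap (B : H →L[ℂ] H) (hB : IsSelfAdjoint B) {ε : ℝ} (hε : 0 < ε)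
    (h : ∀ l ∈ spectrum ℝ B, l = 0 ∨ ε ≤ |l|) :
    IsClosed ((LinearMap.range (B : H →ₗ[ℂ] H) : Submodule ℂ H) : Set H) := by
  set g : ℝ → ℝ := fun t => t / max (t ^ 2) (ε ^ 2) with hg
  have hd : ∀ t : ℝ, max (t ^ 2) (ε ^ 2) ≠ 0 := by
    intro t
    have : (0:ℝ) < ε ^ 2 := by positivity
    have := le_max_right (t ^ 2) (ε ^ 2)
    nlinarith
  have hgc : Continuous g := by
    apply Continuous.div continuous_id (by fun_prop) hd
  set C : H →L[ℂ] H := cfc g B with hC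
  have e0 : ∀ t ∈ spectrum ℝ B, t * g t * t = t := by
    intro t ht
    rcases h t ht with h0 | h0
    · simp [h0, hg]
    · have ht2 : max (t ^ 2) (ε ^ 2) = t ^ 2 := by
        apply max_eq_left
        nlinarith [abs_nonneg t, sq_abs t, hε]
      have htne : t ≠ 0 := by
        intro h'
        rw [h'] at h0; simp at h0; linarith
      rw [hg]
      simp only [ht2]
      field_simp
  have e2 : cfc (fun t : ℝ => t * g t * t) B = B * C * B := by
    rw [cfc_mul _ _ B (by fun_prop) (by fun_prop),
      cfc_mul _ _ B (by fun_prop) (by fun_prop), cfc_id' ℝ B]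
  have key : B * C * B = B := by
    rw [← e2, cfc_congr e0, cfc_id' ℝ B]
  have hset : ((LinearMap.range (B : H →ₗ[ℂ] H) : Submodule ℂ H) : Set H) = {y : H | (B * C) y = y} := by
    ext y
    constructor
    · rintro ⟨x, rfl⟩
      have := congrFun (congrArg (fun (T : H →L[ℂ] H) => (T : H → H)) key) x
      simpa [mul_apply] using this
    · intro hy
      exact ⟨C y, hy⟩
  rw [hset]
  exact isClosed_eq (B * C).continuous continuous_id

lemma exists_bound_of_isClosed_range (A : H →L[ℂ] H)
    (h : IsClosed ((LinearMap.range (A : H →ₗ[ℂ] H) : Submodule ℂ H) : Set H)) :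
    ∃ c : ℝ, 0 < c ∧ ∀ x ∈ (LinearMap.ker (A : H →ₗ[ℂ] H))ᗮ, c * ‖x‖ ≤ ‖A x‖ := by
  set K : Submodule ℂ H := (LinearMap.ker (A : H →ₗ[ℂ] H))ᗮ with hK
  set R : Submodule ℂ H := LinearMap.range (A : H →ₗ[ℂ] H) with hR
  haveI : CompleteSpace R := h.completeSpace_coe
  haveI : CompleteSpace (LinearMap.ker (A : H →ₗ[ℂ] H)) := (ContinuousLinearMap.isClosed_ker A).completeSpace_coe
  haveI : CompleteSpace K := (Submodule.isClosed_orthogonal _).completeSpace_coe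
  set f : K →L[ℂ] R := (A.comp K.subtypeL).codRestrict R
    (fun x => LinearMap.mem_range_self _ _) with hf
  have hfapp : ∀ x : K, (f x : H) = A x := fun x => rfl
  have hker : LinearMap.ker (f : K →ₗ[ℂ] R) = ⊥ := by
    rw [Submodule.eq_bot_iff]
    intro x hx
    have hx0 : A (x : H) = 0 := by
      have : (f x : H) = 0 := by rw [LinearMap.mem_ker] at hx; exact congrArg Subtype.val hx
      rwa [hfapp] at this
    have hxK : (x : H) ∈ K := x.2
    have : ((x : H) : H) = 0 := by
      have := (Submodule.mem_orthogonal _ _).mp hxK (x : H) (LinearMap.mem_ker.mpr hx0)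
      exact inner_self_eq_zero.mp this
    exact Subtype.ext this
  have hrange : LinearMap.range (f : K →ₗ[ℂ] R) = ⊤ := by
    rw [Submodule.eq_top_iff']
    rintro ⟨y, x, rfl⟩
    set q : H := x - ((LinearMap.ker (A : H →ₗ[ℂ] H)).orthogonalProjection x : H) with hq
    have hqK : q ∈ K := Submodule.sub_starProjection_mem_orthogonal x
    refine ⟨⟨q, hqK⟩, ?_⟩
    apply Subtype.ext
    show A q = A x
    rw [hq, map_sub]
    have : A (((LinearMap.ker (A : H →ₗ[ℂ] H)).orthogonalProjection x : H)) = 0 :=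
      ((LinearMap.ker (A : H →ₗ[ℂ] H)).orthogonalProjection x).2
    rw [this, sub_zero]
  set e := ContinuousLinearEquiv.ofBijective f hker hrange with he
  set N : ℝ := ‖(e.symm : R →L[ℂ] K)‖ with hN
  refine ⟨(N + 1)⁻¹, by positivity, ?_⟩
  intro x hx
  set z : K := ⟨x, hx⟩ with hz
  have h1 : ‖x‖ = ‖e.symm (e z)‖ := by rw [e.symm_apply_apply]; rfl
  have h2 : ‖e.symm (e z)‖ ≤ N * ‖e z‖ := (e.symm : R →L[ℂ] K).le_opNorm (e z)
  have h3 : ‖e z‖ = ‖A x‖ := by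
    have : (e z : H) = A x := by
      rw [he]
      rw [show ((ContinuousLinearEquiv.ofBijective f hker hrange) z : H) = (f z : H) from rfl]
      exact hfapp z
    rw [show ‖e z‖ = ‖(e z : H)‖ from rfl, this]
  have hN0 : 0 ≤ N := norm_nonneg _
  rw [inv_mul_le_iff₀ (by positivity), mul_comm]
  calc ‖x‖ = ‖e.symm (e z)‖ := h1
    _ ≤ N * ‖e z‖ := h2
    _ = N * ‖A x‖ := by rw [h3]
    _ ≤ ‖A x‖ * (N + 1) := by nlinarith [norm_nonneg (A x)]

lemma final_arith {c M s t : ℝ} (hc : 0 < c) (hM : 1 ≤ M) (hs : 0 < s) (hs2 : s ^ 2 = t)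
    (hfinal : c * (s - s ^ 2) ≤ 2 * M * s ^ 2)
    (htε2 : t < c ^ 2 / (2 * (c + 2 * M) ^ 2)) : False := by
  have h10 : c * s ≤ (c + 2 * M) * s ^ 2 := by nlinarith
  have h11 : c ≤ (c + 2 * M) * s :=
    le_of_mul_le_mul_right (by nlinarith : c * s ≤ ((c + 2 * M) * s) * s) hs
  have h12 : c ^ 2 ≤ (c + 2 * M) ^ 2 * t := by nlinarith
  have h13 : t * (2 * (c + 2 * M) ^ 2) < c ^ 2 := by
    rw [← lt_div_iff₀ (by positivity)]
    exact htε2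
  nlinarith

lemma key_step (P : H →L[ℂ] H) (hP : P * P = P)
    (hA : IsClosed ((LinearMap.range ((P + adjoint P : H →L[ℂ] H) : H →ₗ[ℂ] H) : Submodule ℂ H) : Set H)) :
    IsClosed ((LinearMap.range ((2 - P - adjoint P : H →L[ℂ] H) : H →ₗ[ℂ] H) : Submodule ℂ H) : Set H) := by
  set Q : H →L[ℂ] H := adjoint P with hQdef
  have hQ : Q * Q = Q := by rw [hQdef, ← star_eq_adjoint, ← star_mul, hP]
  have hstarP : star P = Q := star_eq_adjoint P
  have hstarQ : star Q = P := by rw [hQdef, ← star_eq_adjoint, star_star]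
  set A : H →L[ℂ] H := P + Q with hAdef
  set B : H →L[ℂ] H := 2 - P - Q with hBdef
  set D : H →L[ℂ] H := P - Q with hDdef
  have hA_sa : IsSelfAdjoint A := by
    rw [IsSelfAdjoint, hAdef, star_add, hstarP, hstarQ, add_comm]
  have hB_sa : IsSelfAdjoint B := by
    rw [IsSelfAdjoint, hBdef, star_sub, star_sub, hstarP, hstarQ]
    have h2 : star (2 : H →L[ℂ] H) = 2 := by
      calc star (2 : H →L[ℂ] H) = star (1 + 1) := by norm_num
        _ = 2 := by rw [star_add, star_one]; norm_num
    rw [h2]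
    abel
  have hD_star : star D = -D := by rw [hDdef, star_sub, hstarP, hstarQ]; noncomm_ring
  have hDadj : adjoint D = -D := by rw [← star_eq_adjoint, hD_star]
  have fact1 : A * D = D * B := by
    have h1 : A * D = P * P - P * Q + Q * P - Q * Q := by rw [hAdef, hDdef]; noncomm_ring
    have h2 : D * B = 2 * P - P * P - P * Q - 2 * Q + Q * P + Q * Q := by
      rw [hBdef, hDdef]; noncomm_ring
    rw [h1, h2, hP, hQ]; noncomm_ring
  have fact4 : B * D = D * A := by
    have h1 : B * D = 2 * P - 2 * Q - P * P + P * Q - Q * P + Q * Q := by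
      rw [hBdef, hDdef]; noncomm_ring
    have h2 : D * A = P * P + P * Q - Q * P - Q * Q := by rw [hAdef, hDdef]; noncomm_ring
    rw [h1, h2, hP, hQ]; noncomm_ring
  have factDD : D * D = 2 * B - B * B := by
    have h1 : D * D = P * P - P * Q - Q * P + Q * Q := by rw [hDdef]; noncomm_ring
    have h2 : 2 * B - B * B = 2 * P + 2 * Q - P * P - P * Q - Q * P - Q * Q := by
      rw [hBdef]; noncomm_ring
    rw [h1, h2, hP, hQ]; noncomm_ring
  -- inner product identities
  have hDD_inner : ∀ y : H, ⟪D y, D y⟫ = -⟪(D * D) y, y⟫ := by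
    intro y
    have h1 : ⟪(adjoint D) (D y), y⟫ = ⟪D y, D y⟫ := adjoint_inner_left D y (D y)
    rw [hDadj] at h1
    simp only [neg_apply, inner_neg_left] at h1
    rw [← h1, ContinuousLinearMap.mul_apply]
  have hB_inner : ∀ y : H, ⟪(B * B) y, y⟫ = (‖B y‖ : ℂ) ^ 2 := by
    intro y
    have h1 : ⟪(adjoint B) (B y), y⟫ = ⟪B y, B y⟫ := adjoint_inner_left B y (B y)
    rw [hB_sa.adjoint_eq] at h1
    rw [ContinuousLinearMap.mul_apply, h1, inner_self_eq_norm_sq_to_K]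
    norm_cast
  have two_mul_B : (2 : H →L[ℂ] H) * B = B + B := by noncomm_ring
  have normD : ∀ y : H, ‖D y‖ ^ 2 = ‖B y‖ ^ 2 - 2 * (⟪B y, y⟫).re := by
    intro y
    have h1 : ⟪D y, D y⟫ = -(⟪B y, y⟫ + ⟪B y, y⟫ - (‖B y‖ : ℂ) ^ 2) := by
      rw [hDD_inner y, factDD, two_mul_B]
      congr 1
      rw [← hB_inner y]
      rw [show ((B + B - B * B) y) = B y + B y - (B * B) y by simp]
      rw [inner_sub_left, inner_add_left]
    have h2 : (‖D y‖ : ℝ) ^ 2 = (⟪D y, D y⟫).re := by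
      rw [← inner_self_eq_norm_sq (𝕜 := ℂ) (D y)]
      simp
    rw [h2, h1]
    simp [← Complex.ofReal_pow]
    ring
  have factSS : (B - 1) * (B - 1) = 1 - D * D := by rw [factDD]; noncomm_ring
  have normS : ∀ y : H, ‖(B - 1) y‖ ^ 2 = ‖y‖ ^ 2 + ‖D y‖ ^ 2 := by
    intro y
    have hS_sa : IsSelfAdjoint (B - 1) := hB_sa.sub ((IsSelfAdjoint.one (H →L[ℂ] H)))
    have h1 := adjoint_inner_left (B - 1) y ((B - 1) y)
    rw [hS_sa.adjoint_eq] at h1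
    have h2 : ⟪(B - 1) ((B - 1) y), y⟫ = ⟪y, y⟫ - ⟪(D * D) y, y⟫ := by
      rw [← ContinuousLinearMap.mul_apply, factSS]
      rw [show ((1 - D * D : H →L[ℂ] H) y) = y - (D * D) y by simp]
      rw [inner_sub_left]
    rw [h1] at h2
    have h3 : ⟪(B - 1) y, (B - 1) y⟫ = ⟪y, y⟫ + ⟪D y, D y⟫ := by
      rw [h2, hDD_inner y]; ring
    have e1 : (‖(B - 1) y‖ : ℝ) ^ 2 = (⟪(B - 1) y, (B - 1) y⟫).re := by
      rw [← inner_self_eq_norm_sq (𝕜 := ℂ) ((B - 1) y)]; simp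
    have e2 : (‖y‖ : ℝ) ^ 2 = (⟪y, y⟫).re := by
      rw [← inner_self_eq_norm_sq (𝕜 := ℂ) y]; simp
    have e3 : (‖D y‖ : ℝ) ^ 2 = (⟪D y, D y⟫).re := by
      rw [← inner_self_eq_norm_sq (𝕜 := ℂ) (D y)]; simp
    rw [e1, e2, e3, h3]
    simp
  -- main argument
  by_contra hnB
  obtain ⟨c, hc, hbound⟩ := exists_bound_of_isClosed_range A hA
  set M : ℝ := ‖D‖ + 1 with hM
  have hM1 : 1 ≤ M := by have := norm_nonneg D; rw [hM]; linarith
  have hMpos : 0 < M := by linarith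
  set ε : ℝ := min (1/4) (c ^ 2 / (2 * (c + 2 * M) ^ 2)) with hε
  have hεpos : 0 < ε := by
    apply lt_min (by norm_num)
    positivity
  have hgap : ¬ ∀ l ∈ spectrum ℝ B, l = 0 ∨ ε ≤ |l| := fun hgap' =>
    hnB (isClosed_range_of_gap B hB_sa hεpos hgap')
  push_neg at hgap
  obtain ⟨l, hl, hl0, hlε⟩ := hgap
  set t : ℝ := |l| with ht
  have htpos : 0 < t := abs_pos.mpr hl0
  have ht4 : t < 1/4 := lt_of_lt_of_le hlε (min_le_left _ _)
  have htε2 : t < c ^ 2 / (2 * (c + 2 * M) ^ 2) := lt_of_lt_of_le hlε (min_le_right _ _)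
  set η : ℝ := t ^ 2 / M with hη
  have hηpos : 0 < η := by positivity
  have hηt : η ≤ t ^ 2 := by
    rw [hη]
    exact div_le_self (by positivity) hM1
  obtain ⟨x, hx1, hxe⟩ := approx_eigen B hB_sa hl hηpos
  -- l is negative
  have hlneg : l < 0 := by
    by_contra hpos
    push_neg at hpos
    have hl' : 0 < l := lt_of_le_of_ne hpos (Ne.symm hl0)
    have htl : t = l := abs_of_pos hl'
    have h1 : 1 ≤ ‖(B - 1) x‖ := by
      have hh := normS x
      rw [hx1] at hh
      nlinarith [norm_nonneg ((B - 1) x), sq_nonneg (‖(B - 1) x‖ - 1), sq_nonneg (‖D x‖)]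
    have h2 : ‖(B - 1) x‖ ≤ η + (1 - l) := by
      have e1 : (B - 1) x = (B x - (l : ℂ) • x) + ((l : ℂ) • x - x) := by
        rw [sub_apply, ContinuousLinearMap.one_apply]; abel
      rw [e1]
      refine (norm_add_le _ _).trans ?_
      have e2 : ‖(l : ℂ) • x - x‖ = 1 - l := by
        rw [show (l : ℂ) • x - x = ((l : ℂ) - 1) • x by rw [sub_smul, one_smul],
          norm_smul, hx1, mul_one]
        rw [show ((l : ℂ) - 1) = ((l - 1 : ℝ) : ℂ) by push_cast; ring]
        rw [Complex.norm_real, Real.norm_eq_abs, abs_of_neg (by nlinarith)]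
        ring
      linarith [hxe]
    have : l ≤ η := by linarith
    nlinarith
  have hlt : (l : ℝ) = -t := by rw [ht, abs_of_neg hlneg]; ring
  -- q1
  have hnl : ‖(l : ℂ)‖ = t := by
    rw [Complex.norm_real, Real.norm_eq_abs, ht]
  have q1 : ‖B x‖ ≤ t + η := by
    have e1 : B x = (B x - (l : ℂ) • x) + (l : ℂ) • x := by abel
    rw [e1]
    refine (norm_add_le _ _).trans ?_
    rw [norm_smul, hx1, mul_one, hnl]
    linarith [hxe]
  -- q2
  have q2 : (⟪B x, x⟫).re ≤ -t + η := by
    have e1 : ⟪B x, x⟫ = ⟪B x - (l : ℂ) • x, x⟫ + ⟪(l : ℂ) • x, x⟫ := by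
      rw [← inner_add_left]; norm_num
    have e2 : ⟪(l : ℂ) • x, x⟫ = (l : ℂ) := by
      rw [inner_smul_left, Complex.conj_ofReal, inner_self_eq_norm_sq_to_K, hx1]
      norm_num
    have e3 : (⟪B x - (l : ℂ) • x, x⟫).re ≤ η := by
      refine le_trans (Complex.re_le_norm _) ?_
      refine le_trans (norm_inner_le_norm _ _) ?_
      rw [hx1, mul_one]
      exact hxe
    rw [e1]
    simp only [Complex.add_re]
    rw [e2]
    simp only [Complex.ofReal_re]
    linarith
  -- q3
  have q3 : 2 * t - 2 * η ≤ ‖D x‖ ^ 2 := by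
    have := normD x
    nlinarith [sq_nonneg (‖B x‖)]
  -- q4
  have q4 : ‖A (D x)‖ ≤ M * (t + η) := by
    have e1 : A (D x) = D (B x) := by
      have := congrArg (fun (T : H →L[ℂ] H) => T x) fact1
      simpa [mul_apply] using this
    rw [e1]
    calc ‖D (B x)‖ ≤ ‖D‖ * ‖B x‖ := D.le_opNorm (B x)
      _ ≤ M * (t + η) := by
          apply mul_le_mul (by rw [hM]; linarith) q1 (norm_nonneg _) (by linarith)
  -- q5
  have q5 : ∀ z ∈ LinearMap.ker (A : H →ₗ[ℂ] H), ‖⟪D x, z⟫‖ ≤ η * M / t * ‖z‖ := by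
    intro z hz
    have hzA : A z = 0 := hz
    have hDz : B (D z) = 0 := by
      have := congrArg (fun (T : H →L[ℂ] H) => T z) fact4
      simp only [ContinuousLinearMap.mul_apply] at this
      rw [this, hzA, map_zero]
    have e1 : ⟪D x, z⟫ = -⟪x, D z⟫ := by
      have := adjoint_inner_right D x z
      rw [hDadj] at this
      simp only [neg_apply, inner_neg_right] at this
      linear_combination -this
    have e2 : (l : ℂ) * ⟪x, D z⟫ = ⟪(l : ℂ) • x - B x, D z⟫ := by
      rw [inner_sub_left, inner_smul_left, Complex.conj_ofReal]
      have e3 : ⟪B x, D z⟫ = 0 := by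
        have := adjoint_inner_right B x (D z)
        rw [hB_sa.adjoint_eq] at this
        rw [← this, hDz, inner_zero_right]
      rw [e3]; ring
    have e4 : t * ‖⟪x, D z⟫‖ ≤ η * (M * ‖z‖) := by
      have h5 : ‖(l : ℂ) * ⟪x, D z⟫‖ = t * ‖⟪x, D z⟫‖ := by
        rw [norm_mul, hnl]
      rw [← h5, e2]
      refine le_trans (norm_inner_le_norm _ _) ?_
      have h6 : ‖(l : ℂ) • x - B x‖ ≤ η := by rw [norm_sub_rev]; exact hxe
      have h7 : ‖D z‖ ≤ M * ‖z‖ := by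
        refine le_trans (D.le_opNorm z) ?_
        apply mul_le_mul_of_nonneg_right (by rw [hM]; linarith) (norm_nonneg _)
      exact mul_le_mul h6 h7 (norm_nonneg _) (by linarith)
    rw [e1, norm_neg]
    rw [div_mul_eq_mul_div, le_div_iff₀ htpos]
    calc ‖⟪x, D z⟫‖ * t = t * ‖⟪x, D z⟫‖ := by ring
      _ ≤ η * (M * ‖z‖) := e4
      _ = η * M * ‖z‖ := by ring
  -- orthogonal projection setup
  haveI : CompleteSpace (LinearMap.ker (A : H →ₗ[ℂ] H)) := (ContinuousLinearMap.isClosed_ker A).completeSpace_coe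
  set p : H := ((LinearMap.ker (A : H →ₗ[ℂ] H)).orthogonalProjection (D x) : H) with hp
  have hpmem : p ∈ LinearMap.ker (A : H →ₗ[ℂ] H) := ((LinearMap.ker (A : H →ₗ[ℂ] H)).orthogonalProjection (D x)).2
  have q6 : ‖p‖ ≤ η * M / t := by
    rcases eq_or_ne p 0 with h0 | h0
    · rw [h0, norm_zero]; positivity
    · have hip : ⟪D x, p⟫ = ⟪p, p⟫ := by
        have : ⟪D x - p, p⟫ = 0 := Submodule.starProjection_inner_eq_zero (D x) p hpmem
        rw [inner_sub_left] at this
        linear_combination this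
      have h8 : ‖p‖ ^ 2 = ‖⟪D x, p⟫‖ := by
        rw [hip, inner_self_eq_norm_sq_to_K]
        simp [norm_pow]
      have h9 := q5 p hpmem
      rw [← h8] at h9
      have hpn : 0 < ‖p‖ := norm_pos_iff.mpr h0
      nlinarith
  set y : H := D x - p with hy
  have hymem : y ∈ (LinearMap.ker (A : H →ₗ[ℂ] H))ᗮ := by
    rw [hy, hp]
    exact Submodule.sub_starProjection_mem_orthogonal (D x)
  have hAy : A y = A (D x) := by
    rw [hy, map_sub, (show A p = 0 from hpmem), sub_zero]
  have q9 := hbound y hymem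
  -- final arithmetic
  have hηMt : η * M / t = t := by
    rw [hη]; field_simp
  have hynorm : ‖D x‖ - t ≤ ‖y‖ := by
    rw [hy]
    calc ‖D x‖ - t ≤ ‖D x‖ - ‖p‖ := by rw [← hηMt]; linarith [q6]
      _ ≤ ‖D x - p‖ := norm_sub_norm_le _ _
  have hDx2 : t ≤ ‖D x‖ ^ 2 := by nlinarith
  set s : ℝ := Real.sqrt t with hs
  have hs2 : s ^ 2 = t := Real.sq_sqrt htpos.le
  have hspos : 0 < s := Real.sqrt_pos.mpr htpos
  have hsDx : s ≤ ‖D x‖ := by nlinarith [norm_nonneg (D x)]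
  have hfinal : c * (s - s ^ 2) ≤ 2 * M * s ^ 2 := by
    have h10 : c * (s - t) ≤ c * ‖y‖ := by
      apply mul_le_mul_of_nonneg_left _ hc.le
      linarith
    have h11 : ‖A y‖ ≤ 2 * M * t := by
      rw [hAy]
      refine q4.trans ?_
      have he : η ≤ t := by nlinarith [htpos, ht4, hηt]
      have hmm := mul_le_mul_of_nonneg_left (by linarith : t + η ≤ 2 * t) hMpos.le
      linarith
    rw [hs2]
    linarith [q9]
  exact final_arith hc hM1 hspos hs2 hfinal htε2


/-- `R(P + P*)` is closed iff `R(2I − P − P*)` is closed. -/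
theorem range_add_closed_iff (P : H →L[ℂ] H) (hP : P * P = P) :
    IsClosed ((LinearMap.range ((P + adjoint P : H →L[ℂ] H) : H →ₗ[ℂ] H) : Submodule ℂ H) : Set H) ↔
      IsClosed ((LinearMap.range ((2 - P - adjoint P : H →L[ℂ] H) : H →ₗ[ℂ] H) : Submodule ℂ H) : Set H) := by
  constructor
  · exact key_step P hP
  · intro h
    have hQ : (1 - P) * (1 - P) = 1 - P := by
      have e : (1 - P) * (1 - P) = 1 - P - P + P * P := by noncomm_ring
      rw [e, hP]; noncomm_ring
    have hadj : adjoint (1 - P) = 1 - adjoint P := by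
      rw [← star_eq_adjoint, star_sub, star_one, star_eq_adjoint]
    have h2 : (2 : H →L[ℂ] H) = 1 + 1 := by norm_num
    have e1 : (1 - P) + adjoint (1 - P) = 2 - P - adjoint P := by
      rw [hadj, h2]; noncomm_ring
    have e2 : 2 - (1 - P) - adjoint (1 - P) = P + adjoint P := by
      rw [hadj, h2]; noncomm_ring
    have hres := key_step (1 - P) hQ (by rw [e1]; exact h)
    rwa [e2] at hres
end

section
/- Let J ∈ B(H) be a symmetry and P ∈ B(H) a bounded idempotent with JPJ = P* (a J-projection). Then there exist a unique J-contractive projection E1 (i.e., a bounded idempotent E1 with E1* J E1 ≤ J) and a unique J-expansive projection E2 (i.e., a bounded idempotent E2 with E2* J E2 ≥ J) such that P = E1E2 = E2E1 = E1 + E2 − I and E1E2* = E2*E1 = E1 + E2* − I. -/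
open ContinuousLinearMap

set_option maxHeartbeats 1000000
set_option synthInstance.maxHeartbeats 400000

variable {H : Type*} [NormedAddCommGroup H] [InnerProductSpace ℂ H] [CompleteSpace H]

namespace JProjAux

/-- positive part function -/
noncomputable def pP : ℝ → ℝ := fun t => max t 0
/-- negative part function -/
noncomputable def pN : ℝ → ℝ := fun t => max (-t) 0
/-- positive spectral cut-off -/
noncomputable def gP : ℝ → ℝ := fun t => min 1 (max t 0)
/-- negative spectral cut-off -/
noncomputable def gN : ℝ → ℝ := fun t => min 1 (max (-t) 0)

lemma cont_pP : Continuous pP := continuous_id.max continuous_const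
lemma cont_pN : Continuous pN := continuous_id.neg.max continuous_const
lemma cont_gP : Continuous gP := continuous_const.min cont_pP
lemma cont_gN : Continuous gN := continuous_const.min cont_pN

lemma pP_nonneg (t : ℝ) : 0 ≤ pP t := le_max_right _ _
lemma pN_nonneg (t : ℝ) : 0 ≤ pN t := le_max_right _ _

lemma pP_sub_pN (t : ℝ) : pP t - pN t = t := max_zero_sub_max_neg_zero_eq_self t

lemma pP_mul_pN (t : ℝ) : pP t * pN t = 0 := by
  rcases le_total t 0 with h | h
  · have h1 : max t 0 = 0 := max_eq_right h
    simp [pP, pN, h1]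
  · have h1 : max (-t) 0 = 0 := max_eq_right (by linarith)
    simp [pP, pN, h1]

lemma pN_mul_pP (t : ℝ) : pN t * pP t = 0 := by rw [mul_comm]; exact pP_mul_pN t

lemma gP_mul_gN (t : ℝ) : gP t * gN t = 0 := by
  rcases le_total t 0 with h | h
  · have h1 : max t 0 = 0 := max_eq_right h
    simp [gP, gN, h1]
  · have h1 : max (-t) 0 = 0 := max_eq_right (by linarith)
    simp [gP, gN, h1]

lemma gN_mul_gP (t : ℝ) : gN t * gP t = 0 := by rw [mul_comm]; exact gP_mul_gN t

section onSpec

variable {t : ℝ} (ht : t = 0 ∨ t ≤ -1 ∨ 1 ≤ t)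
include ht

lemma mul_gP : t * gP t = pP t := by
  rcases ht with rfl | h | h
  · simp [gP, pP]
  · have h1 : max t 0 = 0 := max_eq_right (by linarith)
    simp [gP, pP, h1]
  · have h1 : max t 0 = t := max_eq_left (by linarith)
    have h2 : min 1 t = 1 := min_eq_left (by linarith)
    simp [gP, pP, h1, h2]

lemma mul_gN : t * gN t = -pN t := by
  rcases ht with rfl | h | h
  · simp [gN, pN]
  · have h1 : max (-t) 0 = -t := max_eq_left (by linarith)
    have h2 : min 1 (-t) = 1 := min_eq_left (by linarith)
    simp [gN, pN, h1, h2]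
  · have h1 : max (-t) 0 = 0 := max_eq_right (by linarith)
    simp [gN, pN, h1]

lemma gP_idem : gP t * gP t = gP t := by
  rcases ht with rfl | h | h
  · simp [gP]
  · have h1 : max t 0 = 0 := max_eq_right (by linarith)
    simp [gP, h1]
  · have h1 : max t 0 = t := max_eq_left (by linarith)
    have h2 : min 1 t = 1 := min_eq_left (by linarith)
    simp [gP, h1, h2]

lemma gN_idem : gN t * gN t = gN t := by
  rcases ht with rfl | h | h
  · simp [gN]
  · have h1 : max (-t) 0 = -t := max_eq_left (by linarith)
    have h2 : min 1 (-t) = 1 := min_eq_left (by linarith)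
    simp [gN, h1, h2]
  · have h1 : max (-t) 0 = 0 := max_eq_right (by linarith)
    simp [gN, h1]

end onSpec

variable {J E a e : H →L[ℂ] H}

/-- A positive operator annihilated by conjugation with `e` annihilates `e`. -/
lemma ann_aux (ha : 0 ≤ a) (h : star e * (a * e) = 0) : a * e = 0 := by
  have hr : CFC.sqrt a * CFC.sqrt a = a := CFC.sqrt_mul_sqrt_self a ha
  have hrsa : star (CFC.sqrt a) = CFC.sqrt a :=
    (IsSelfAdjoint.of_nonneg (CFC.sqrt_nonneg a)).star_eq
  have h2 : star (CFC.sqrt a * e) * (CFC.sqrt a * e) = 0 := by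
    rw [star_mul, hrsa, mul_assoc, ← mul_assoc (CFC.sqrt a), hr]
    exact h
  have h3 : CFC.sqrt a * e = 0 := by
    rwa [CStarRing.star_mul_self_eq_zero_iff] at h2
  calc a * e = CFC.sqrt a * (CFC.sqrt a * e) := by rw [← mul_assoc, hr]
  _ = 0 := by rw [h3, mul_zero]

/-- A `J`-contractive or `J`-expansive idempotent `E` automatically satisfies
`E* J = J E`, i.e. it is a `J`-projection. -/
lemma jsa_of_idem (hJ : star J = J) (hE : E * E = E)
    (hpos : 0 ≤ J - star E * J * E ∨ 0 ≤ star E * J * E - J) :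
    star E * J = J * E := by
  have hEs : star E * star E = star E := by rw [← star_mul, hE]
  have hEs' : ∀ x, star E * (star E * x) = star E * x := fun x => by rw [← mul_assoc, hEs]
  have key : star E * J * E = J * E := by
    rcases hpos with h | h
    · have h0 : star E * ((J - star E * J * E) * E) = 0 := by
        simp only [sub_mul, mul_sub, mul_assoc, hE, hEs', sub_self]
      have h1 := ann_aux h h0
      have h2 : (J - star E * J * E) * E = J * E - star E * J * E := by
        simp only [sub_mul, mul_assoc, hE]
      rw [h2] at h1
      exact (sub_eq_zero.mp h1).symm
    · have h0 : star E * ((star E * J * E - J) * E) = 0 := by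
        simp only [sub_mul, mul_sub, mul_assoc, hE, hEs', sub_self]
      have h1 := ann_aux h h0
      have h2 : (star E * J * E - J) * E = star E * J * E - J * E := by
        simp only [sub_mul, mul_assoc, hE]
      rw [h2] at h1
      exact sub_eq_zero.mp h1
  have hsa : star (J * E) = J * E := by
    conv_lhs => rw [← key]
    rw [star_mul, star_mul, star_star, hJ, ← mul_assoc, key]
  rw [← hsa, star_mul, hJ]

end JProjAux

open JProjAux in
/-- Every `J`-projection `P` factors uniquely as `P = E1 E2 = E2 E1 = E1 + E2 − I`
with `E1 E2* = E2* E1 = E1 + E2* − I`, where `E1` is a `J`-contractive projection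
and `E2` is a `J`-expansive projection. -/
theorem jProjection_unique_factorization (J P : H →L[ℂ] H) (hJ : IsSymmetry J)
    (hP : P * P = P) (hJP : J * P * J = adjoint P) :
    ∃! E : (H →L[ℂ] H) × (H →L[ℂ] H),
      (E.1 * E.1 = E.1 ∧ (J - adjoint E.1 * J * E.1).IsPositive) ∧
      (E.2 * E.2 = E.2 ∧ (adjoint E.2 * J * E.2 - J).IsPositive) ∧
      P = E.1 * E.2 ∧ P = E.2 * E.1 ∧ P = E.1 + E.2 - 1 ∧
      E.1 * adjoint E.2 = adjoint E.2 * E.1 ∧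
      E.1 * adjoint E.2 = E.1 + adjoint E.2 - 1 := by
  obtain ⟨hJsa', hJ2⟩ := hJ
  have hJsa : star J = J := hJsa'
  simp only [← star_eq_adjoint] at hJP ⊢
  have hJJ : ∀ x : H →L[ℂ] H, J * (J * x) = x := fun x => by rw [← mul_assoc, hJ2, one_mul]
  set Q : H →L[ℂ] H := 1 - P with hQdef
  clear_value Q
  have hQ2 : Q * Q = Q := by
    rw [hQdef]
    simp only [sub_mul, mul_sub, one_mul, mul_one, hP]
    abel
  have hJP' : J * (P * J) = star P := by rw [← mul_assoc]; exact hJP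
  have hQs : J * (Q * J) = star Q := by
    rw [hQdef]
    simp only [sub_mul, mul_sub, one_mul, mul_one, star_sub, star_one, hJP', hJ2]
  have hsQJ : star Q * J = J * Q := by
    rw [← hQs]
    simp only [mul_assoc, hJ2, mul_one]
  set S : H →L[ℂ] H := J * Q with hSdef
  clear_value S
  have hSsa : IsSelfAdjoint S := by
    rw [IsSelfAdjoint, hSdef, star_mul, hJsa, hsQJ]
    exact hSdef
  have hSJS : ∀ x, S * (J * (S * x)) = S * x := by
    intro x
    rw [hSdef, mul_assoc J Q x, hJJ, mul_assoc J Q (Q * x), ← mul_assoc Q Q x, hQ2]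
  have hS2 : S * S = star Q * Q := by
    rw [hSdef, ← mul_assoc, mul_assoc J Q J, hQs]
  -- `S⁴ - S² ≥ 0`
  have hsQs : star Q * star Q = star Q := by rw [← star_mul, hQ2]
  have h40 : (0 : H →L[ℂ] H) ≤ S ^ 4 - S ^ 2 := by
    have e1 : S ^ 2 = star Q * Q := by rw [sq, hS2]
    have e2 : S ^ 4 = star Q * Q * (star Q * Q) := by
      rw [show (4 : ℕ) = 2 + 2 from rfl, pow_add, e1]
    have hM : S ^ 4 - S ^ 2 = star (Q - star Q * Q) * (Q - star Q * Q) := by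
      rw [e1, e2, star_sub, star_mul, star_star]
      have r1 : ∀ x, star Q * (star Q * x) = star Q * x := fun x => by
        rw [← mul_assoc, hsQs]
      have r2 : ∀ x, Q * (Q * x) = Q * x := fun x => by rw [← mul_assoc, hQ2]
      simp only [sub_mul, mul_sub, mul_assoc, hQ2, hsQs, r1, r2]
      abel
    rw [hM]
    exact star_mul_self_nonneg _
  -- spectrum of `S` avoids `(-1, 1) \ {0}`
  have hspec : ∀ t ∈ spectrum ℝ S, t = 0 ∨ t ≤ -1 ∨ 1 ≤ t := by
    intro t ht
    have hc1 : cfc (fun t : ℝ => t ^ 4 - t ^ 2) S = S ^ 4 - S ^ 2 := by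
      rw [cfc_sub (fun t : ℝ => t ^ 4) (fun t : ℝ => t ^ 2) S,
        cfc_pow_id S 4 hSsa, cfc_pow_id S 2 hSsa]
    have hcont4 : ContinuousOn (fun t : ℝ => t ^ 4 - t ^ 2) (spectrum ℝ S) :=
      ((continuous_pow 4).sub (continuous_pow 2)).continuousOn
    have hmap := cfc_map_spectrum (R := ℝ) (f := fun t : ℝ => t ^ 4 - t ^ 2) (a := S)
      hSsa hcont4
    have hmem : t ^ 4 - t ^ 2 ∈ spectrum ℝ (S ^ 4 - S ^ 2) := by
      rw [← hc1, hmap]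
      exact ⟨t, ht, rfl⟩
    have h5 : (0 : ℝ) ≤ t ^ 4 - t ^ 2 := spectrum_nonneg_of_nonneg h40 hmem
    rcases eq_or_ne t 0 with h | h
    · exact Or.inl h
    · right
      have h6 : 0 < t ^ 2 := by positivity
      have ht2 : 1 ≤ t ^ 2 := by nlinarith
      rcases le_or_gt 0 t with h7 | h7
      · right; nlinarith
      · left; nlinarith
  -- spectral parts
  set Sp : H →L[ℂ] H := cfc pP S with hSp
  clear_value Sp
  set Sn : H →L[ℂ] H := cfc pN S with hSn
  clear_value Sn
  set Xp : H →L[ℂ] H := cfc gP S with hXp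
  clear_value Xp
  set Xn : H →L[ℂ] H := cfc gN S with hXn
  clear_value Xn
  have C0 : Sp - Sn = S := by
    rw [hSp, hSn, ← cfc_sub pP pN S cont_pP.continuousOn cont_pN.continuousOn]
    calc cfc (fun t => pP t - pN t) S = cfc (fun t : ℝ => t) S :=
      cfc_congr fun t _ => pP_sub_pN t
    _ = S := cfc_id' ℝ S hSsa
  have C6p : (0 : H →L[ℂ] H) ≤ Sp := hSp ▸ cfc_nonneg fun t _ => pP_nonneg t
  have C6n : (0 : H →L[ℂ] H) ≤ Sn := hSn ▸ cfc_nonneg fun t _ => pN_nonneg t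
  have sSp : star Sp = Sp := (IsSelfAdjoint.of_nonneg C6p).star_eq
  have sSn : star Sn = Sn := (IsSelfAdjoint.of_nonneg C6n).star_eq
  have C1l : S * Xp = Sp := by
    rw [hXp, hSp]
    nth_rewrite 1 [← cfc_id' ℝ S hSsa]
    rw [← cfc_mul _ _ S continuous_id'.continuousOn cont_gP.continuousOn]
    exact cfc_congr fun t ht => mul_gP (hspec t ht)
  have C1r : Xp * S = Sp := by
    rw [hXp, hSp]
    nth_rewrite 2 [← cfc_id' ℝ S hSsa]
    rw [← cfc_mul _ _ S cont_gP.continuousOn continuous_id'.continuousOn]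
    exact cfc_congr fun t ht => by
      rw [mul_comm]; exact mul_gP (hspec t ht)
  have C2l : S * Xn = -Sn := by
    rw [hXn, hSn]
    nth_rewrite 1 [← cfc_id' ℝ S hSsa]
    rw [← cfc_mul _ _ S continuous_id'.continuousOn cont_gN.continuousOn, ← cfc_neg pN S]
    exact cfc_congr fun t ht => mul_gN (hspec t ht)
  have C2r : Xn * S = -Sn := by
    rw [hXn, hSn]
    nth_rewrite 2 [← cfc_id' ℝ S hSsa]
    rw [← cfc_mul _ _ S cont_gN.continuousOn continuous_id'.continuousOn, ← cfc_neg pN S]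
    exact cfc_congr fun t ht => by
      rw [mul_comm]; exact mul_gN (hspec t ht)
  have C3 : Xp * Xp = Xp := by
    rw [hXp, ← cfc_mul _ _ S cont_gP.continuousOn cont_gP.continuousOn]
    exact cfc_congr fun t ht => gP_idem (hspec t ht)
  have C3n : Xn * Xn = Xn := by
    rw [hXn, ← cfc_mul _ _ S cont_gN.continuousOn cont_gN.continuousOn]
    exact cfc_congr fun t ht => gN_idem (hspec t ht)
  have C4 : Xp * Xn = 0 := by
    rw [hXp, hXn, ← cfc_mul _ _ S cont_gP.continuousOn cont_gN.continuousOn]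
    calc cfc (fun t => gP t * gN t) S = cfc (0 : ℝ → ℝ) S :=
      cfc_congr fun t _ => gP_mul_gN t
    _ = 0 := cfc_zero ℝ S
  have C4n : Xn * Xp = 0 := by
    rw [hXp, hXn, ← cfc_mul _ _ S cont_gN.continuousOn cont_gP.continuousOn]
    calc cfc (fun t => gN t * gP t) S = cfc (0 : ℝ → ℝ) S :=
      cfc_congr fun t _ => gN_mul_gP t
    _ = 0 := cfc_zero ℝ S
  have C5 : Sp * Sn = 0 := by
    rw [hSp, hSn, ← cfc_mul _ _ S cont_pP.continuousOn cont_pN.continuousOn]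
    calc cfc (fun t => pP t * pN t) S = cfc (0 : ℝ → ℝ) S :=
      cfc_congr fun t _ => pP_mul_pN t
    _ = 0 := cfc_zero ℝ S
  have C5n : Sn * Sp = 0 := by
    rw [hSp, hSn, ← cfc_mul _ _ S cont_pN.continuousOn cont_pP.continuousOn]
    calc cfc (fun t => pN t * pP t) S = cfc (0 : ℝ → ℝ) S :=
      cfc_congr fun t _ => pN_mul_pP t
    _ = 0 := cfc_zero ℝ S
  -- the key products with J
  have D1 : Sp * (J * Sp) = Sp := by
    calc Sp * (J * Sp) = (Xp * S) * (J * (S * Xp)) := by rw [C1r, C1l]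
    _ = Xp * (S * (J * (S * Xp))) := by rw [mul_assoc]
    _ = Xp * (S * Xp) := by rw [hSJS]
    _ = Xp * (Xp * S) := by rw [C1l, C1r]
    _ = Xp * Xp * S := by rw [mul_assoc]
    _ = Sp := by rw [C3, C1r]
  have D2 : Sn * (J * Sn) = -Sn := by
    have e1 : Sn = -(Xn * S) := by rw [C2r, neg_neg]
    have e2 : Sn = -(S * Xn) := by rw [C2l, neg_neg]
    calc Sn * (J * Sn) = -(Xn * S) * (J * -(S * Xn)) := by rw [← e1, ← e2]
    _ = (Xn * S) * (J * (S * Xn)) := by simp only [mul_neg, neg_mul, neg_neg]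
    _ = Xn * (S * (J * (S * Xn))) := by rw [mul_assoc]
    _ = Xn * (S * Xn) := by rw [hSJS]
    _ = Xn * (Xn * S) := by rw [C2l, C2r]
    _ = Xn * Xn * S := by rw [← mul_assoc]
    _ = -Sn := by rw [C3n, C2r]
  have D3 : Sp * (J * Sn) = 0 := by
    have e2 : Sn = -(S * Xn) := by rw [C2l, neg_neg]
    calc Sp * (J * Sn) = (Xp * S) * (J * -(S * Xn)) := by rw [C1r, ← e2]
    _ = -((Xp * S) * (J * (S * Xn))) := by simp only [mul_neg, neg_mul]
    _ = -(Xp * (S * (J * (S * Xn)))) := by rw [mul_assoc]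
    _ = -(Xp * (S * Xn)) := by rw [hSJS]
    _ = -(Xp * (Xn * S)) := by rw [C2l, C2r]
    _ = -(Xp * Xn * S) := by rw [← mul_assoc]
    _ = 0 := by rw [C4, zero_mul, neg_zero]
  have D4 : Sn * (J * Sp) = 0 := by
    have e1 : Sn = -(Xn * S) := by rw [C2r, neg_neg]
    calc Sn * (J * Sp) = -(Xn * S) * (J * (S * Xp)) := by rw [← e1, C1l]
    _ = -((Xn * S) * (J * (S * Xp))) := by simp only [neg_mul]
    _ = -(Xn * (S * (J * (S * Xp)))) := by rw [mul_assoc]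
    _ = -(Xn * (S * Xp)) := by rw [hSJS]
    _ = -(Xn * (Xp * S)) := by rw [C1l, C1r]
    _ = -(Xn * Xp * S) := by rw [← mul_assoc]
    _ = 0 := by rw [C4n, zero_mul, neg_zero]
  -- canonical pair
  set e1 : H →L[ℂ] H := 1 - J * Sp with he1
  clear_value e1
  set e2 : H →L[ℂ] H := 1 + J * Sn with he2
  clear_value e2
  have hse1 : star e1 = 1 - Sp * J := by
    rw [he1, star_sub, star_one, star_mul, sSp, hJsa]
  have hse2 : star e2 = 1 + Sn * J := by
    rw [he2, star_add, star_one, star_mul, sSn, hJsa]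
  have hkey : J * Sp - J * Sn = 1 - P := by
    rw [← mul_sub, C0, hSdef, hJJ, hQdef]
  have k1 : J * Sp * (J * Sp) = J * Sp := by rw [mul_assoc, D1]
  have G1 : e1 * e1 = e1 := by
    rw [he1]
    have expand : (1 - J * Sp) * (1 - J * Sp)
        = 1 - J * Sp - J * Sp + J * Sp * (J * Sp) := by noncomm_ring
    rw [expand, k1]
    abel
  have k2 : J * Sn * (J * Sn) = -(J * Sn) := by rw [mul_assoc, D2, mul_neg]
  have G3 : e2 * e2 = e2 := by
    rw [he2]
    have expand : (1 + J * Sn) * (1 + J * Sn)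
        = 1 + J * Sn + J * Sn + J * Sn * (J * Sn) := by noncomm_ring
    rw [expand, k2]
    abel
  have G2 : J - star e1 * J * e1 = Sp := by
    rw [hse1, he1]
    have expand : J - (1 - Sp * J) * J * (1 - J * Sp)
        = J * (J * Sp) + Sp * (J * J) - Sp * ((J * J) * (J * Sp)) := by noncomm_ring
    rw [expand, hJ2, hJJ, mul_one, one_mul, D1]
    abel
  have G4 : star e2 * J * e2 - J = Sn := by
    rw [hse2, he2]
    have expand : (1 + Sn * J) * J * (1 + J * Sn) - J
        = J * (J * Sn) + Sn * (J * J) + Sn * ((J * J) * (J * Sn)) := by noncomm_ring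
    rw [expand, hJ2, hJJ, mul_one, one_mul, D2]
    abel
  have h0pn : J * Sp * (J * Sn) = 0 := by rw [mul_assoc, D3, mul_zero]
  have h0np : J * Sn * (J * Sp) = 0 := by rw [mul_assoc, D4, mul_zero]
  have G5 : e1 * e2 = P := by
    rw [he1, he2]
    have expand : (1 - J * Sp) * (1 + J * Sn)
        = 1 - (J * Sp - J * Sn) - J * Sp * (J * Sn) := by noncomm_ring
    rw [expand, h0pn, hkey]
    abel
  have G6 : e2 * e1 = P := by
    rw [he1, he2]
    have expand : (1 + J * Sn) * (1 - J * Sp)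
        = 1 - (J * Sp - J * Sn) - J * Sn * (J * Sp) := by noncomm_ring
    rw [expand, h0np, hkey]
    abel
  have G7 : e1 + e2 - 1 = P := by
    rw [he1, he2]
    have expand : (1 - J * Sp) + (1 + J * Sn) - 1 = 1 - (J * Sp - J * Sn) := by abel
    rw [expand, hkey]
    abel
  have hpn0 : J * Sp * (Sn * J) = 0 := by
    rw [mul_assoc, ← mul_assoc Sp Sn J, C5, zero_mul, mul_zero]
  have hnp0 : Sn * J * (J * Sp) = 0 := by rw [mul_assoc, hJJ, C5n]
  have expandL : (1 - J * Sp) * (1 + Sn * J)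
      = 1 + Sn * J - J * Sp - J * Sp * (Sn * J) := by noncomm_ring
  have G8 : e1 * star e2 = star e2 * e1 := by
    rw [hse2, he1]
    have expandR : (1 + Sn * J) * (1 - J * Sp)
        = 1 + Sn * J - J * Sp - Sn * J * (J * Sp) := by noncomm_ring
    rw [expandL, expandR, hpn0, hnp0]
  have G9 : e1 * star e2 = e1 + star e2 - 1 := by
    rw [hse2, he1]
    rw [expandL, hpn0]
    abel
  -- positive/negative part identification
  have hSpn : (S⁺ : H →L[ℂ] H) = Sp ∧ (S⁻ : H →L[ℂ] H) = Sn :=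
    CFC.posPart_negPart_unique C0.symm C5 C6p C6n
  refine ⟨(e1, e2), ⟨⟨G1, ?_⟩, ⟨G3, ?_⟩, G5.symm, G6.symm, G7.symm, G8, G9⟩, ?_⟩
  · rw [G2]
    exact (nonneg_iff_isPositive _).mp C6p
  · rw [G4]
    exact (nonneg_iff_isPositive _).mp C6n
  · intro y hy
    obtain ⟨⟨h1, h2⟩, ⟨h3, h4⟩, h5, h6, h7, h8, h9⟩ := hy
    have h2' : (0 : H →L[ℂ] H) ≤ J - star y.1 * J * y.1 := (nonneg_iff_isPositive _).mpr h2
    have h4' : (0 : H →L[ℂ] H) ≤ star y.2 * J * y.2 - J := (nonneg_iff_isPositive _).mpr h4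
    have u1 : star y.1 * J = J * y.1 := jsa_of_idem hJsa h1 (Or.inl h2')
    have u2 : star y.2 * J = J * y.2 := jsa_of_idem hJsa h3 (Or.inr h4')
    have v1 : star y.1 * J * y.1 = J * y.1 := by rw [u1, mul_assoc, h1]
    have v2 : star y.2 * J * y.2 = J * y.2 := by rw [u2, mul_assoc, h3]
    have hb : (0 : H →L[ℂ] H) ≤ J - J * y.1 := by rwa [v1] at h2'
    have hc : (0 : H →L[ℂ] H) ≤ J * y.2 - J := by rwa [v2] at h4'
    have hz : (1 - y.1) * (star y.2 - 1) = 0 := by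
      have expand : (1 - y.1) * (star y.2 - 1)
          = y.1 + star y.2 - 1 - y.1 * star y.2 := by noncomm_ring
      rw [expand, ← h9, sub_self]
    have hb' : J - J * y.1 = J * (1 - y.1) := by noncomm_ring
    have hc' : J * y.2 - J = (star y.2 - 1) * J := by rw [← u2]; noncomm_ring
    have hbc : (J - J * y.1) * (J * y.2 - J) = 0 := by
      rw [hb', hc', mul_assoc, ← mul_assoc (1 - y.1), hz, zero_mul, mul_zero]
    have habc : S = (J - J * y.1) - (J * y.2 - J) := by
      rw [hSdef, hQdef, h7]
      noncomm_ring
    have huniq : (S⁺ : H →L[ℂ] H) = J - J * y.1 ∧ (S⁻ : H →L[ℂ] H) = J * y.2 - J :=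
      CFC.posPart_negPart_unique habc hbc hb hc
    have hbSp : J * Sp = J * (J - J * y.1) := by rw [← huniq.1.symm.trans hSpn.1]
    have hcSn : J * Sn = J * (J * y.2 - J) := by rw [← huniq.2.symm.trans hSpn.2]
    have hh1 : J * (J - J * y.1) = 1 - y.1 := by rw [mul_sub, hJJ, hJ2]
    have hh2 : J * (J * y.2 - J) = y.2 - 1 := by rw [mul_sub, hJJ, hJ2]
    have hF1 : y.1 = e1 := by
      rw [he1, hbSp, hh1]
      abel
    have hF2 : y.2 = e2 := by
      rw [he2, hcSn, hh2]
      abel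
    exact Prod.ext hF1 hF2
end
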